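/- arXiv:1001.3752 — 9 statements merged into one kernel-verified Lean document; each statement's English description precedes it below -/
import Mathlib

section
/- Let n ≥ 1 and let G be a finite simple graph on the 2n distinct vertices x_1,…,x_n,y_1,…,y_n that is bipartite with bipartition (V, W), where V = {x_1,…,x_n} and W = {y_1,…,y_n}, such that {x_i, y_i} is an edge of G for every i and such that whenever {x_i, y_j} is an edge of G one has i ≤ j. Then for each i = 0,…,n the set F_i = {y_1,…,y_i, x_{i+1},…,x_n} is a maximal independent set of G, F_0 = V, F_n = W, and |F_i ∩ F_{i+1}| = n − 1 for every i = 0,…,n−1. -/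
/-- A set of vertices is independent if no two of its elements are adjacent. -/
def IndepSet {α : Type*} (G : SimpleGraph α) (S : Finset α) : Prop :=
  ∀ ⦃u⦄, u ∈ S → ∀ ⦃v⦄, v ∈ S → ¬ G.Adj u v

/-- A maximal independent set: an independent set not properly contained in any
other independent set. -/
def MaxIndepSet {α : Type*} (G : SimpleGraph α) (S : Finset α) : Prop :=
  IndepSet G S ∧ ∀ ⦃T : Finset α⦄, IndepSet G T → S ⊆ T → T = S

/-- `(V, W)` is a bipartition of `G`: the vertex set is the disjoint union of `V` and `W`
and every edge joins a vertex of `V` to a vertex of `W`. -/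
def IsBipartition {α : Type*} [Fintype α] [DecidableEq α] (G : SimpleGraph α) (V W : Finset α) : Prop :=
  Disjoint V W ∧ V ∪ W = Finset.univ ∧
    ∀ ⦃u v⦄, G.Adj u v → (u ∈ V ∧ v ∈ W) ∨ (u ∈ W ∧ v ∈ V)

/-- Proposition 1.1, (b) ⇒ (a): if `G` is bipartite on `x₁,…,xₙ,y₁,…,yₙ` with
`{xᵢ,yᵢ}` an edge for every `i`, and `{xᵢ,yⱼ}` an edge implies `i ≤ j`, then the sets
`Fᵢ = {y₁,…,yᵢ,x_{i+1},…,xₙ}` are maximal independent sets with `F₀ = V`, `Fₙ = W`,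
and `|Fᵢ ∩ F_{i+1}| = n - 1`. -/
theorem bipartite_chain_of_labeling {α : Type*} [Fintype α] [DecidableEq α]
    (n : ℕ) (hn : 1 ≤ n) (G : SimpleGraph α) (x y : Fin n → α)
    (hx : Function.Injective x) (hy : Function.Injective y)
    (hxy : ∀ i j, x i ≠ y j)
    (hbip : IsBipartition G (Finset.univ.image x) (Finset.univ.image y))
    (hmatch : ∀ i, G.Adj (x i) (y i))
    (hle : ∀ i j, G.Adj (x i) (y j) → (i : ℕ) ≤ (j : ℕ))
    (F : ℕ → Finset α)
    (hF : ∀ i, F i =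
      ((Finset.univ.filter (fun t : Fin n => (t : ℕ) < i)).image y) ∪
      ((Finset.univ.filter (fun t : Fin n => i ≤ (t : ℕ))).image x)) :
    (∀ i ≤ n, MaxIndepSet G (F i)) ∧
    F 0 = Finset.univ.image x ∧
    F n = Finset.univ.image y ∧
    ∀ i < n, (F i ∩ F (i + 1)).card = n - 1 := by
  obtain ⟨hdisj, huniv, hedge⟩ := hbip
  -- no edges within the x's or within the y's
  have hxx : ∀ a b, ¬ G.Adj (x a) (x b) := by
    intro a b h
    rcases hedge h with ⟨_, h2⟩ | ⟨h1, _⟩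
    · obtain ⟨j, _, hj⟩ := Finset.mem_image.mp h2
      exact hxy b j hj.symm
    · obtain ⟨j, _, hj⟩ := Finset.mem_image.mp h1
      exact hxy a j hj.symm
  have hyy : ∀ a b, ¬ G.Adj (y a) (y b) := by
    intro a b h
    rcases hedge h with ⟨h1, _⟩ | ⟨_, h2⟩
    · obtain ⟨j, _, hj⟩ := Finset.mem_image.mp h1
      exact hxy j a hj
    · obtain ⟨j, _, hj⟩ := Finset.mem_image.mp h2
      exact hxy j b hj
  have hmemF : ∀ i v, v ∈ F i ↔ (∃ a : Fin n, (a : ℕ) < i ∧ y a = v) ∨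
      (∃ a : Fin n, i ≤ (a : ℕ) ∧ x a = v) := by
    intro i v
    rw [hF i]
    simp [Finset.mem_union, Finset.mem_image, Finset.mem_filter]
  -- independence
  have hind : ∀ i, IndepSet G (F i) := by
    intro i u hu v hv hadj
    rw [hmemF] at hu hv
    rcases hu with ⟨a, ha, rfl⟩ | ⟨a, ha, rfl⟩ <;>
      rcases hv with ⟨b, hb, rfl⟩ | ⟨b, hb, rfl⟩
    · exact hyy a b hadj
    · exact absurd (hle b a hadj.symm) (by omega)
    · exact absurd (hle a b hadj) (by omega)
    · exact hxx a b hadj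
  -- maximality
  have hmax : ∀ i ≤ n, MaxIndepSet G (F i) := by
    intro i hi
    refine ⟨hind i, fun T hT hsub => ?_⟩
    by_contra hne
    obtain ⟨v, hvT, hvF⟩ := Finset.exists_of_ssubset (lt_of_le_of_ne hsub (Ne.symm hne))
    have hv' : v ∈ Finset.univ.image x ∪ Finset.univ.image y := by
      rw [huniv]; exact Finset.mem_univ v
    rcases Finset.mem_union.mp hv' with hvx | hvy
    · obtain ⟨t, _, rfl⟩ := Finset.mem_image.mp hvx
      have ht : (t : ℕ) < i := by
        by_contra h
        exact hvF ((hmemF i (x t)).mpr (Or.inr ⟨t, by omega, rfl⟩))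
      have hyt : y t ∈ T := hsub ((hmemF i (y t)).mpr (Or.inl ⟨t, ht, rfl⟩))
      exact hT hvT hyt (hmatch t)
    · obtain ⟨t, _, rfl⟩ := Finset.mem_image.mp hvy
      have ht : i ≤ (t : ℕ) := by
        by_contra h
        exact hvF ((hmemF i (y t)).mpr (Or.inl ⟨t, by omega, rfl⟩))
      have hxt : x t ∈ T := hsub ((hmemF i (x t)).mpr (Or.inr ⟨t, ht, rfl⟩))
      exact hT hxt hvT (hmatch t)
  refine ⟨hmax, ?_, ?_, ?_⟩
  · rw [hF 0]
    simp
  · rw [hF n]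
    have h1 : (Finset.univ.filter (fun t : Fin n => (t : ℕ) < n)) = Finset.univ := by
      ext t; simp [t.isLt]
    have h2 : (Finset.univ.filter (fun t : Fin n => n ≤ (t : ℕ))) = ∅ := by
      ext t; simp
    rw [h1, h2]
    simp
  · intro i hi
    have hinter : F i ∩ F (i + 1) =
        ((Finset.univ.filter (fun t : Fin n => (t : ℕ) < i)).image y) ∪
        ((Finset.univ.filter (fun t : Fin n => i + 1 ≤ (t : ℕ))).image x) := by
      ext v
      simp only [Finset.mem_inter, hmemF, Finset.mem_union, Finset.mem_image,
        Finset.mem_filter, Finset.mem_univ, true_and]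
      constructor
      · rintro ⟨h1, h2⟩
        rcases h1 with ⟨a, ha, rfl⟩ | ⟨a, ha, rfl⟩
        · exact Or.inl ⟨a, ha, rfl⟩
        · rcases h2 with ⟨b, hb, hb'⟩ | ⟨b, hb, hb'⟩
          · exact absurd hb' (hxy a b).symm
          · exact Or.inr ⟨b, hb, hb'⟩
      · rintro (⟨a, ha, rfl⟩ | ⟨a, ha, rfl⟩)
        · exact ⟨Or.inl ⟨a, ha, rfl⟩, Or.inl ⟨a, by omega, rfl⟩⟩
        · exact ⟨Or.inr ⟨a, by omega, rfl⟩, Or.inr ⟨a, ha, rfl⟩⟩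
    have hdisj' : Disjoint
        ((Finset.univ.filter (fun t : Fin n => (t : ℕ) < i)).image y)
        ((Finset.univ.filter (fun t : Fin n => i + 1 ≤ (t : ℕ))).image x) := by
      rw [Finset.disjoint_left]
      rintro v hv hv'
      obtain ⟨a, _, rfl⟩ := Finset.mem_image.mp hv
      obtain ⟨b, _, hb⟩ := Finset.mem_image.mp hv'
      exact hxy b a hb
    have hfin : i < n := hi
    have hlt : (Finset.univ.filter (fun t : Fin n => (t : ℕ) < i)) =
        Finset.Iio (⟨i, hfin⟩ : Fin n) := by
      ext t; simp [Fin.lt_def]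
    have hgt : (Finset.univ.filter (fun t : Fin n => i + 1 ≤ (t : ℕ))) =
        Finset.Ioi (⟨i, hfin⟩ : Fin n) := by
      ext t; simp [Fin.lt_def]
    rw [hinter, Finset.card_union_of_disjoint hdisj',
      Finset.card_image_of_injective _ hy, Finset.card_image_of_injective _ hx,
      hlt, hgt, Fin.card_Iio, Fin.card_Ioi]
    omega
end

section
/- Let n ≥ 1 and let G be a finite simple graph on the 2n distinct vertices x_1,…,x_n,y_1,…,y_n that is bipartite with bipartition (V, W), where V = {x_1,…,x_n} and W = {y_1,…,y_n}, such that {x_i, y_i} is an edge of G for every i, and assume G is unmixed. Suppose there exist maximal independent sets F_0 = V, F_1, …, F_n = W of G with |F_i ∩ F_{i+1}| = n − 1 for every i = 0,…,n−1. Then there is a permutation σ of {1,…,n} such that F_i = {y_{σ(1)},…,y_{σ(i)}, x_{σ(i+1)},…,x_{σ(n)}} for every i = 0,…,n; consequently, whenever {x_{σ(i)}, y_{σ(j)}} is an edge of G one has i ≤ j. -/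
/-- `G` is unmixed if all maximal independent sets have the same cardinality. -/
def Unmixed {α : Type*} (G : SimpleGraph α) : Prop :=
  ∀ ⦃S T : Finset α⦄, MaxIndepSet G S → MaxIndepSet G T → S.card = T.card

/-- Proposition 1.1, (a) ⇒ (b): if `G` is an unmixed bipartite graph on
`x₁,…,xₙ,y₁,…,yₙ` with `{xᵢ,yᵢ}` an edge for every `i`, and there is a chain of maximal
independent sets `V = F₀, F₁, …, Fₙ = W` with consecutive intersections of cardinality
`n - 1`, then after a simultaneous relabeling `σ` one has
`Fᵢ = {y_{σ(1)},…,y_{σ(i)}, x_{σ(i+1)},…,x_{σ(n)}}`, and consequently `{x_{σ(i)}, y_{σ(j)}}`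
an edge implies `i ≤ j`. -/
theorem labeling_of_bipartite_chain {α : Type*} [Fintype α] [DecidableEq α]
    (n : ℕ) (hn : 1 ≤ n) (G : SimpleGraph α) (x y : Fin n → α)
    (hx : Function.Injective x) (hy : Function.Injective y)
    (hxy : ∀ i j, x i ≠ y j)
    (hbip : IsBipartition G (Finset.univ.image x) (Finset.univ.image y))
    (hmatch : ∀ i, G.Adj (x i) (y i))
    (hunmixed : Unmixed G)
    (F : ℕ → Finset α)
    (hF0 : F 0 = Finset.univ.image x)
    (hFn : F n = Finset.univ.image y)
    (hmax : ∀ i ≤ n, MaxIndepSet G (F i))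
    (hcard : ∀ i < n, (F i ∩ F (i + 1)).card = n - 1) :
    ∃ σ : Equiv.Perm (Fin n),
      (∀ i ≤ n, F i =
        ((Finset.univ.filter (fun t : Fin n => (t : ℕ) < i)).image (fun t => y (σ t))) ∪
        ((Finset.univ.filter (fun t : Fin n => i ≤ (t : ℕ))).image (fun t => x (σ t)))) ∧
      ∀ i j, G.Adj (x (σ i)) (y (σ j)) → (i : ℕ) ≤ (j : ℕ) := by
  classical
  obtain ⟨hdis, huniv, hadjVW⟩ := hbip
  set S : ℕ → Finset (Fin n) := fun k => Finset.univ.filter (fun t => y t ∈ F k) with hSdef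
  set T : ℕ → Finset (Fin n) := fun k => Finset.univ.filter (fun t => x t ∈ F k) with hTdef
  have hmemS : ∀ k t, t ∈ S k ↔ y t ∈ F k := by
    intro k t; simp [hSdef]
  have hmemT : ∀ k t, t ∈ T k ↔ x t ∈ F k := by
    intro k t; simp [hTdef]
  have hcardF : ∀ i ≤ n, (F i).card = n := by
    intro i hi
    have h0 := hunmixed (hmax i hi) (hmax 0 (Nat.zero_le n))
    rw [h0, hF0, Finset.card_image_of_injective _ hx, Finset.card_univ, Fintype.card_fin]
  have hST : ∀ k ≤ n, Disjoint (S k) (T k) := by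
    intro k hk
    rw [Finset.disjoint_left]
    intro t htS htT
    exact (hmax k hk).1 ((hmemT k t).mp htT) ((hmemS k t).mp htS) (hmatch t)
  have hdecomp : ∀ k ≤ n, F k = (S k).image y ∪ (T k).image x := by
    intro k hk
    ext u
    constructor
    · intro hu
      have hu2 : u ∈ Finset.univ.image x ∪ Finset.univ.image y := by
        rw [huniv]; exact Finset.mem_univ u
      rcases Finset.mem_union.mp hu2 with h | h
      · obtain ⟨t, -, rfl⟩ := Finset.mem_image.mp h
        exact Finset.mem_union_right _ (Finset.mem_image_of_mem x ((hmemT k t).mpr hu))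
      · obtain ⟨t, -, rfl⟩ := Finset.mem_image.mp h
        exact Finset.mem_union_left _ (Finset.mem_image_of_mem y ((hmemS k t).mpr hu))
    · intro hu
      rcases Finset.mem_union.mp hu with h | h
      · obtain ⟨t, ht, rfl⟩ := Finset.mem_image.mp h
        exact (hmemS k t).mp ht
      · obtain ⟨t, ht, rfl⟩ := Finset.mem_image.mp h
        exact (hmemT k t).mp ht
  have hdisIm : ∀ A B : Finset (Fin n), Disjoint (A.image y) (B.image x) := by
    intro A B
    exact (hdis.symm.mono (Finset.image_subset_image (Finset.subset_univ A))
      (Finset.image_subset_image (Finset.subset_univ B)))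
  have hcardST : ∀ k ≤ n, (S k).card + (T k).card = n := by
    intro k hk
    have h := hcardF k hk
    rw [hdecomp k hk, Finset.card_union_of_disjoint (hdisIm _ _),
      Finset.card_image_of_injective _ hy, Finset.card_image_of_injective _ hx] at h
    exact h
  have hTc : ∀ k ≤ n, T k = (S k)ᶜ := by
    intro k hk
    have hun : S k ∪ T k = Finset.univ := by
      apply Finset.eq_univ_of_card
      rw [Finset.card_union_of_disjoint (hST k hk), hcardST k hk, Fintype.card_fin]
    ext t
    simp only [Finset.mem_compl]
    constructor
    · intro ht hs
      exact Finset.disjoint_left.mp (hST k hk) hs ht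
    · intro hns
      rcases Finset.mem_union.mp (hun ▸ Finset.mem_univ t) with h | h
      · exact absurd h hns
      · exact h
  have hS0 : S 0 = ∅ := by
    rw [Finset.eq_empty_iff_forall_notMem]
    intro t ht
    have := (hmemS 0 t).mp ht
    rw [hF0] at this
    obtain ⟨s, -, hs⟩ := Finset.mem_image.mp this
    exact hxy s t hs
  have hSn : S n = Finset.univ := by
    apply Finset.eq_univ_of_forall
    intro t
    exact (hmemS n t).mpr (hFn ▸ Finset.mem_image_of_mem y (Finset.mem_univ t))
  have hstep : ∀ i < n, (S (i+1) \ S i).card + (S i \ S (i+1)).card = 1 := by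
    intro i hi
    have hi1 : i + 1 ≤ n := hi
    have hFi := hcard i hi
    have hinter : F i ∩ F (i+1) = ((S i ∩ S (i+1)).image y) ∪ ((T i ∩ T (i+1)).image x) := by
      ext u
      constructor
      · intro hu
        obtain ⟨hu1, hu2⟩ := Finset.mem_inter.mp hu
        have hu3 : u ∈ Finset.univ.image x ∪ Finset.univ.image y := by
          rw [huniv]; exact Finset.mem_univ u
        rcases Finset.mem_union.mp hu3 with h | h
        · obtain ⟨t, -, rfl⟩ := Finset.mem_image.mp h
          refine Finset.mem_union_right _ (Finset.mem_image_of_mem x ?_)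
          exact Finset.mem_inter.mpr ⟨(hmemT i t).mpr hu1, (hmemT (i+1) t).mpr hu2⟩
        · obtain ⟨t, -, rfl⟩ := Finset.mem_image.mp h
          refine Finset.mem_union_left _ (Finset.mem_image_of_mem y ?_)
          exact Finset.mem_inter.mpr ⟨(hmemS i t).mpr hu1, (hmemS (i+1) t).mpr hu2⟩
      · intro hu
        rcases Finset.mem_union.mp hu with h | h
        · obtain ⟨t, ht, rfl⟩ := Finset.mem_image.mp h
          obtain ⟨h1, h2⟩ := Finset.mem_inter.mp ht
          exact Finset.mem_inter.mpr ⟨(hmemS i t).mp h1, (hmemS (i+1) t).mp h2⟩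
        · obtain ⟨t, ht, rfl⟩ := Finset.mem_image.mp h
          obtain ⟨h1, h2⟩ := Finset.mem_inter.mp ht
          exact Finset.mem_inter.mpr ⟨(hmemT i t).mp h1, (hmemT (i+1) t).mp h2⟩
    rw [hinter, Finset.card_union_of_disjoint (hdisIm _ _),
      Finset.card_image_of_injective _ hy, Finset.card_image_of_injective _ hx] at hFi
    have hTT : T i ∩ T (i+1) = (S i ∪ S (i+1))ᶜ := by
      rw [hTc i hi.le, hTc (i+1) hi1, Finset.compl_union]
    rw [hTT, Finset.card_compl, Fintype.card_fin] at hFi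
    have hUle : (S i ∪ S (i+1)).card ≤ n := by
      calc (S i ∪ S (i+1)).card ≤ Fintype.card (Fin n) := Finset.card_le_univ _
      _ = n := Fintype.card_fin n
    have h1 : (S i ∪ S (i+1)).card + (S i ∩ S (i+1)).card = (S i).card + (S (i+1)).card :=
      Finset.card_union_add_card_inter _ _
    have h2 : (S i \ S (i+1)).card + (S i ∩ S (i+1)).card = (S i).card :=
      Finset.card_sdiff_add_card_inter _ _
    have h3 : (S (i+1) \ S i).card + (S (i+1) ∩ S i).card = (S (i+1)).card :=
      Finset.card_sdiff_add_card_inter _ _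
    rw [Finset.inter_comm] at h3
    omega
  have hid : ∀ s t : Finset (Fin n), (s \ t).card + (s ∩ t).card = s.card :=
    fun s t => Finset.card_sdiff_add_card_inter s t
  have hupper : ∀ i, i ≤ n → (S i).card ≤ i := by
    intro i
    induction i with
    | zero => intro _; simp [hS0]
    | succ k ih =>
      intro hk
      have h1 := hstep k (by omega)
      have h2 := hid (S (k+1)) (S k)
      have h3 : (S (k+1) ∩ S k).card ≤ (S k).card :=
        Finset.card_le_card (Finset.inter_subset_right)
      have h4 := ih (by omega)
      omega
  have hlower : ∀ k, n - k ≤ (S (n - k)).card := by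
    intro k
    induction k with
    | zero => simp [hSn, Finset.card_univ]
    | succ k ih =>
      by_cases hkn : n ≤ k + 1
      · have : n - (k+1) = 0 := by omega
        rw [this]
        exact Nat.zero_le _
      · have hilt : n - (k+1) < n := by omega
        set i := n - (k+1) with hidef
        have hieq : i + 1 = n - k := by omega
        have h1 := hstep i hilt
        have h2 := hid (S (i+1)) (S i)
        have h3 := hid (S i) (S (i+1))
        rw [Finset.inter_comm] at h3
        rw [← hieq] at ih
        omega
  have hScard : ∀ i ≤ n, (S i).card = i := by
    intro i hi
    have h1 := hupper i hi
    have h2 := hlower (n - i)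
    have : n - (n - i) = i := by omega
    rw [this] at h2
    omega
  have hsub : ∀ i < n, S i ⊆ S (i+1) ∧ (S (i+1) \ S i).card = 1 := by
    intro i hi
    have h1 := hstep i hi
    have h2 := hid (S (i+1)) (S i)
    have h3 := hid (S i) (S (i+1))
    rw [Finset.inter_comm] at h3
    have h4 := hScard i hi.le
    have h5 := hScard (i+1) hi
    have he : (S i \ S (i+1)).card = 0 := by omega
    constructor
    · exact Finset.sdiff_eq_empty_iff_subset.mp (Finset.card_eq_zero.mp he)
    · omega
  have hmono : ∀ j, ∀ i ≤ j, j ≤ n → S i ⊆ S j := by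
    intro j
    induction j with
    | zero =>
      intro i hi _
      have : i = 0 := by omega
      rw [this]
    | succ k ih =>
      intro i hi hk
      rcases Nat.lt_or_ge i (k+1) with h | h
      · exact (ih i (by omega) (by omega)).trans (hsub k (by omega)).1
      · have : i = k + 1 := by omega
        rw [this]
  have hone : ∀ t : Fin n, ∃ a, S ((t : ℕ) + 1) \ S (t : ℕ) = {a} :=
    fun t => Finset.card_eq_one.mp (hsub t t.isLt).2
  choose σ0 hσ0 using hone
  have hσmem : ∀ t : Fin n, σ0 t ∈ S ((t : ℕ) + 1) ∧ σ0 t ∉ S (t : ℕ) := by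
    intro t
    have h : σ0 t ∈ S ((t : ℕ) + 1) \ S (t : ℕ) := by
      rw [hσ0 t]; exact Finset.mem_singleton_self _
    exact Finset.mem_sdiff.mp h
  have hinj : Function.Injective σ0 := by
    intro a b hab
    by_contra hne
    have hne' : (a : ℕ) ≠ (b : ℕ) := fun h => hne (Fin.ext h)
    rcases Nat.lt_or_ge (a : ℕ) (b : ℕ) with h | h
    · have h1 : σ0 a ∈ S (b : ℕ) :=
        hmono (b : ℕ) ((a : ℕ) + 1) (by omega) (by omega) (hσmem a).1
      rw [hab] at h1
      exact (hσmem b).2 h1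
    · have hba : (b : ℕ) < (a : ℕ) := by omega
      have h1 : σ0 b ∈ S (a : ℕ) :=
        hmono (a : ℕ) ((b : ℕ) + 1) (by omega) (by omega) (hσmem b).1
      rw [← hab] at h1
      exact (hσmem a).2 h1
  have hbij : Function.Bijective σ0 := Finite.injective_iff_bijective.mp hinj
  have hiff : ∀ i ≤ n, ∀ t : Fin n, (σ0 t ∈ S i ↔ (t : ℕ) < i) := by
    intro i hi t
    constructor
    · intro hmem
      by_contra hlt
      push_neg at hlt
      exact (hσmem t).2 (hmono (t : ℕ) i hlt (by omega) hmem)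
    · intro hlt
      exact hmono i ((t : ℕ) + 1) (by omega) hi (hσmem t).1
  refine ⟨Equiv.ofBijective σ0 hbij, ?_, ?_⟩
  · intro i hi
    have h1 : (Finset.univ.filter (fun t : Fin n => (t : ℕ) < i)).image σ0 = S i := by
      ext a
      constructor
      · intro ha
        obtain ⟨t, ht, rfl⟩ := Finset.mem_image.mp ha
        exact (hiff i hi t).mpr (Finset.mem_filter.mp ht).2
      · intro ha
        obtain ⟨t, rfl⟩ := hbij.surjective a
        exact Finset.mem_image_of_mem σ0
          (Finset.mem_filter.mpr ⟨Finset.mem_univ t, (hiff i hi t).mp ha⟩)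
    have h2 : (Finset.univ.filter (fun t : Fin n => i ≤ (t : ℕ))).image σ0 = (S i)ᶜ := by
      ext a
      constructor
      · intro ha
        obtain ⟨t, ht, rfl⟩ := Finset.mem_image.mp ha
        rw [Finset.mem_compl]
        intro hmem
        have := (hiff i hi t).mp hmem
        have := (Finset.mem_filter.mp ht).2
        omega
      · intro ha
        obtain ⟨t, rfl⟩ := hbij.surjective a
        refine Finset.mem_image_of_mem σ0 (Finset.mem_filter.mpr ⟨Finset.mem_univ t, ?_⟩)
        by_contra hlt
        push_neg at hlt
        exact (Finset.mem_compl.mp ha) ((hiff i hi t).mpr hlt)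
    rw [hdecomp i hi, hTc i hi, ← h2, ← h1, Finset.image_image, Finset.image_image]
    rfl
  · intro i j hadj'
    by_contra hij
    push_neg at hij
    have hk : (j : ℕ) + 1 ≤ n := by
      have := i.isLt
      omega
    have hyF : y (σ0 j) ∈ F ((j : ℕ) + 1) := (hmemS _ _).mp (hσmem j).1
    have hnot : σ0 i ∉ S ((j : ℕ) + 1) := by
      intro hmem
      have := (hiff ((j : ℕ) + 1) hk i).mp hmem
      omega
    have hxF : x (σ0 i) ∈ F ((j : ℕ) + 1) := by
      refine (hmemT _ _).mp ?_
      rw [hTc _ hk]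
      exact Finset.mem_compl.mpr hnot
    exact (hmax ((j : ℕ) + 1) hk).1 hxF hyF hadj'
end

section
/- Let G be a finite simple graph that is bipartite with bipartition (V₁, V₂), where both V₁ and V₂ are nonempty. Then the complement graph of G is connected if and only if G is not a complete bipartite graph, i.e., if and only if there exist x ∈ V₁ and y ∈ V₂ that are not adjacent in G. -/
/-- Lemma 1.2: a bipartite graph with nonempty parts has connected complement
if and only if it is not a complete bipartite graph, i.e. if and only if some vertex of
`V₁` is not adjacent to some vertex of `V₂`. -/
theorem compl_connected_iff_not_complete_bipartite {α : Type*} [Fintype α] [DecidableEq α]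
    (G : SimpleGraph α) (V₁ V₂ : Finset α)
    (hbip : IsBipartition G V₁ V₂) (h₁ : V₁.Nonempty) (h₂ : V₂.Nonempty) :
    Gᶜ.Connected ↔ ∃ x ∈ V₁, ∃ y ∈ V₂, ¬ G.Adj x y := by
  obtain ⟨hdisj, hcov, hadj⟩ := hbip
  have hmem : ∀ u : α, u ∈ V₁ ∨ u ∈ V₂ := by
    intro u
    have : u ∈ V₁ ∪ V₂ := hcov ▸ Finset.mem_univ u
    simpa [Finset.mem_union] using this
  -- no edges within a part
  have hno1 : ∀ u v : α, u ∈ V₁ → v ∈ V₁ → ¬ G.Adj u v := by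
    intro u v hu hv h
    rcases hadj h with ⟨_, hv2⟩ | ⟨hu2, _⟩
    · exact (Finset.disjoint_left.mp hdisj hv) hv2
    · exact (Finset.disjoint_left.mp hdisj hu) hu2
  have hno2 : ∀ u v : α, u ∈ V₂ → v ∈ V₂ → ¬ G.Adj u v := by
    intro u v hu hv h
    rcases hadj h with ⟨hu1, _⟩ | ⟨_, hv1⟩
    · exact (Finset.disjoint_left.mp hdisj hu1) hu
    · exact (Finset.disjoint_left.mp hdisj hv1) hv
  constructor
  · intro hconn
    by_contra hne
    push_neg at hne
    -- all cross pairs adjacent → no Gᶜ-edge crosses, so Gᶜ disconnected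
    obtain ⟨a, ha⟩ := h₁
    obtain ⟨b, hb⟩ := h₂
    have hreach := hconn.preconnected a b
    obtain ⟨w⟩ := hreach
    -- any Gᶜ-walk stays within the part of its start
    have key : ∀ {u v : α}, Gᶜ.Walk u v → u ∈ V₁ → v ∈ V₁ := by
      intro u v w
      induction w with
      | nil => exact id
      | cons h p ih =>
        intro hu
        apply ih
        rcases hmem _ with h1 | h2
        · exact h1
        · exact absurd (hne _ hu _ h2) h.2
    have hb1 : b ∈ V₁ := key w ha
    exact (Finset.disjoint_left.mp hdisj hb1) hb
  · rintro ⟨x, hx, y, hy, hxy⟩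
    have hxyne : x ≠ y := fun h => (Finset.disjoint_left.mp hdisj hx) (h ▸ hy)
    have exy : Gᶜ.Adj x y := ⟨hxyne, hxy⟩
    have reach : ∀ u : α, Gᶜ.Reachable u x := by
      intro u
      rcases hmem u with hu | hu
      · by_cases h : u = x
        · exact h ▸ SimpleGraph.Reachable.refl _
        · exact SimpleGraph.Adj.reachable ⟨h, hno1 _ _ hu hx⟩
      · have huy : Gᶜ.Reachable u y := by
          by_cases h : u = y
          · exact h ▸ SimpleGraph.Reachable.refl _
          · exact SimpleGraph.Adj.reachable ⟨h, hno2 _ _ hu hy⟩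
        exact huy.trans (SimpleGraph.Adj.reachable exy.symm)
    have : Nonempty α := ⟨h₁.choose⟩
    exact SimpleGraph.Connected.mk fun u v => (reach u).trans (reach v).symm
end

section
/- Let n ≥ 1 and let G be a finite simple graph on the 2n distinct vertices x_1,…,x_n,y_1,…,y_n that is bipartite with bipartition (V, W), where V = {x_1,…,x_n} and W = {y_1,…,y_n}. Assume: {x_i, y_i} is an edge of G for every i; whenever {x_i, y_j} is an edge of G one has i ≤ j; and G is unmixed. Then for all indices i, j, k, if {x_i, y_j} and {x_j, y_k} are edges of G, then {x_i, y_k} is also an edge of G. -/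
lemma exists_max_indep {α : Type*} [Fintype α] [DecidableEq α] (G : SimpleGraph α)
    (A : Finset α) (hA : IndepSet G A) : ∃ S, A ⊆ S ∧ MaxIndepSet G S := by
  classical
  let F : Finset (Finset α) := Finset.univ.powerset.filter fun T => IndepSet G T ∧ A ⊆ T
  have hAF : A ∈ F := by
    simp only [F, Finset.mem_filter, Finset.mem_powerset]
    exact ⟨Finset.subset_univ A, hA, Finset.Subset.refl A⟩
  obtain ⟨S, hSF, hmax⟩ := F.exists_max_image Finset.card ⟨A, hAF⟩
  simp only [F, Finset.mem_filter, Finset.mem_powerset] at hSF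
  refine ⟨S, hSF.2.2, hSF.2.1, fun T hT hST => ?_⟩
  have hTF : T ∈ F := by
    simp only [F, Finset.mem_filter, Finset.mem_powerset]
    exact ⟨Finset.subset_univ T, hT, hSF.2.2.trans hST⟩
  exact (Finset.eq_of_subset_of_card_le hST (hmax T hTF)).symm


/-- The key combinatorial claim in the proof of (a) ⇒ (b) of Theorem 1.3: if `G` is an
unmixed bipartite graph on `x₁,…,xₙ,y₁,…,yₙ` with `{xᵢ,yᵢ}` an edge for every `i` and
`{xᵢ,yⱼ}` an edge implying `i ≤ j`, then `{xᵢ,yⱼ}` and `{xⱼ,y_k}` being edges implies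
that `{xᵢ,y_k}` is an edge. -/
theorem edge_trans_of_unmixed_bipartite {α : Type*} [Fintype α] [DecidableEq α]
    (n : ℕ) (hn : 1 ≤ n) (G : SimpleGraph α) (x y : Fin n → α)
    (hx : Function.Injective x) (hy : Function.Injective y)
    (hxy : ∀ i j, x i ≠ y j)
    (hbip : IsBipartition G (Finset.univ.image x) (Finset.univ.image y))
    (hmatch : ∀ i, G.Adj (x i) (y i))
    (hle : ∀ i j, G.Adj (x i) (y j) → (i : ℕ) ≤ (j : ℕ))
    (hunmixed : Unmixed G) :
    ∀ i j k, G.Adj (x i) (y j) → G.Adj (x j) (y k) → G.Adj (x i) (y k) := by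
  classical
  obtain ⟨hdisj, hcov, hedge⟩ := hbip
  -- V := image x is a maximal independent set
  have hVind : IndepSet G (Finset.univ.image x) := by
    intro u hu v hv hadj
    rcases hedge hadj with ⟨_, hvW⟩ | ⟨huW, _⟩
    · exact (Finset.disjoint_left.mp hdisj hv) hvW
    · exact (Finset.disjoint_left.mp hdisj hu) huW
  have hVmax : MaxIndepSet G (Finset.univ.image x) := by
    refine ⟨hVind, fun T hT hVT => ?_⟩
    refine Finset.Subset.antisymm (fun s hs => ?_) hVT
    have : s ∈ Finset.univ.image x ∪ Finset.univ.image y := by rw [hcov]; exact Finset.mem_univ s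
    rcases Finset.mem_union.mp this with h | h
    · exact h
    · obtain ⟨t, _, rfl⟩ := Finset.mem_image.mp h
      exact absurd (hmatch t) (hT (hVT (Finset.mem_image_of_mem x (Finset.mem_univ t))) hs)
  have hVcard : (Finset.univ.image x).card = n := by
    rw [Finset.card_image_of_injective _ hx, Finset.card_univ, Fintype.card_fin]
  intro i j k hij hjk
  by_contra hik
  -- {x i, y k} is independent
  have hA : IndepSet G ({x i, y k} : Finset α) := by
    intro u hu v hv hadj
    simp only [Finset.mem_insert, Finset.mem_singleton] at hu hv
    rcases hu with rfl | rfl <;> rcases hv with rfl | rfl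
    · exact G.irrefl hadj
    · exact hik hadj
    · exact hik hadj.symm
    · exact G.irrefl hadj
  obtain ⟨S, hAS, hSind, hSmax⟩ := exists_max_indep G _ hA
  have hxiS : x i ∈ S := hAS (Finset.mem_insert_self _ _)
  have hykS : y k ∈ S := hAS (Finset.mem_insert_of_mem (Finset.mem_singleton_self _))
  have hScard : S.card = n := by
    rw [hunmixed ⟨hSind, hSmax⟩ hVmax, hVcard]
  -- For every t, x t ∈ S or y t ∈ S
  have hcover : ∀ t : Fin n, x t ∈ S ∨ y t ∈ S := by
    intro t
    set I : Finset (Fin n) := Finset.univ.filter (fun t => x t ∈ S) with hI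
    set J : Finset (Fin n) := Finset.univ.filter (fun t => y t ∈ S) with hJ
    have hIJdisj : Disjoint I J := by
      rw [Finset.disjoint_left]
      intro a haI haJ
      simp only [hI, hJ, Finset.mem_filter] at haI haJ
      exact hSind haI.2 haJ.2 (hmatch a)
    have hSeq : S = I.image x ∪ J.image y := by
      apply Finset.Subset.antisymm
      · intro s hs
        have : s ∈ Finset.univ.image x ∪ Finset.univ.image y := by
          rw [hcov]; exact Finset.mem_univ s
        rcases Finset.mem_union.mp this with h | h
        · obtain ⟨a, _, rfl⟩ := Finset.mem_image.mp h
          exact Finset.mem_union_left _ (Finset.mem_image_of_mem x (by simp [hI, hs]))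
        · obtain ⟨a, _, rfl⟩ := Finset.mem_image.mp h
          exact Finset.mem_union_right _ (Finset.mem_image_of_mem y (by simp [hJ, hs]))
      · intro s hs
        rcases Finset.mem_union.mp hs with h | h
        · obtain ⟨a, ha, rfl⟩ := Finset.mem_image.mp h
          simpa [hI] using (Finset.mem_filter.mp ha).2
        · obtain ⟨a, ha, rfl⟩ := Finset.mem_image.mp h
          simpa [hJ] using (Finset.mem_filter.mp ha).2
    have himgdisj : Disjoint (I.image x) (J.image y) := by
      rw [Finset.disjoint_left]
      intro a haI haJ
      obtain ⟨b, _, rfl⟩ := Finset.mem_image.mp haI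
      obtain ⟨c, _, hc⟩ := Finset.mem_image.mp haJ
      exact hxy b c hc.symm
    have h1 : S.card = I.card + J.card := by
      rw [hSeq, Finset.card_union_of_disjoint himgdisj,
        Finset.card_image_of_injective _ hx, Finset.card_image_of_injective _ hy]
    have hcardsum : I.card + J.card = n := by omega
    have hunion : I ∪ J = Finset.univ := by
      apply Finset.eq_univ_of_card
      rw [Finset.card_union_of_disjoint hIJdisj, hcardsum, Fintype.card_fin]
    have : t ∈ I ∪ J := by rw [hunion]; exact Finset.mem_univ t
    rcases Finset.mem_union.mp this with h | h
    · exact Or.inl (Finset.mem_filter.mp h).2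
    · exact Or.inr (Finset.mem_filter.mp h).2
  rcases hcover j with h | h
  · exact hSind h hykS hjk
  · exact hSind hxiS h hij
end

section
/- Let G be a finite simple graph that is bipartite with bipartition (V, W), and assume G is unmixed, both V and W are maximal independent sets of G, |V| = n, and there exist maximal independent sets F_0 = V, F_1, …, F_n = W of G with |F_i ∩ F_{i+1}| = n − 1 for every i = 0,…,n−1. Then |W| = n and the vertices can be enumerated V = {x_1,…,x_n} and W = {y_1,…,y_n} so that: (i) {x_i, y_i} is an edge of G for every i; (ii) whenever {x_i, y_j} is an edge then i ≤ j; (iii) whenever {x_i, y_j} and {x_j, y_k} are edges, {x_i, y_k} is also an edge. -/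
open Finset

/-- Every independent set is contained in a maximal independent set. -/
lemma exists_maxIndepSet_superset {α : Type*} [Fintype α] [DecidableEq α]
    (G : SimpleGraph α) (S : Finset α) (hS : IndepSet G S) :
    ∃ M, MaxIndepSet G M ∧ S ⊆ M := by
  classical
  set P := (Finset.univ.powerset.filter (fun T => IndepSet G T ∧ S ⊆ T)) with hP
  have hSP : S ∈ P := by
    simp only [hP, mem_filter, mem_powerset]
    exact ⟨subset_univ S, hS, subset_rfl⟩
  obtain ⟨M, hMP, hMmax⟩ := Finset.exists_max_image P Finset.card ⟨S, hSP⟩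
  simp only [hP, mem_filter, mem_powerset] at hMP
  refine ⟨M, ⟨hMP.2.1, ?_⟩, hMP.2.2⟩
  intro T hT hsub
  have hTP : T ∈ P := by
    simp only [hP, mem_filter, mem_powerset]
    exact ⟨subset_univ T, hT, hMP.2.2.trans hsub⟩
  exact (Finset.eq_of_subset_of_card_le hsub (hMmax T hTP)).symm

/-- Theorem 1.3, (a) ⇒ (b): an unmixed bipartite graph with a chain of maximal
independent sets `V = F₀, …, Fₙ = W` intersecting consecutively in cardinality `n - 1`
admits a Herzog–Hibi labeling `V = {x₁,…,xₙ}`, `W = {y₁,…,yₙ}` with (i) `{xᵢ,yᵢ}` edges,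
(ii) `{xᵢ,yⱼ}` an edge implies `i ≤ j`, (iii) `{xᵢ,yⱼ}`, `{xⱼ,y_k}` edges implies
`{xᵢ,y_k}` an edge. -/
theorem herzog_hibi_labeling_of_chain {α : Type*} [Fintype α] [DecidableEq α]
    (G : SimpleGraph α) (V W : Finset α) (n : ℕ)
    (hbip : IsBipartition G V W)
    (hunmixed : Unmixed G)
    (hVmax : MaxIndepSet G V) (hWmax : MaxIndepSet G W)
    (hV : V.card = n)
    (F : ℕ → Finset α)
    (hF0 : F 0 = V) (hFn : F n = W)
    (hmax : ∀ i ≤ n, MaxIndepSet G (F i))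
    (hcard : ∀ i < n, (F i ∩ F (i + 1)).card = n - 1) :
    W.card = n ∧
    ∃ x y : Fin n → α,
      Function.Injective x ∧ Function.Injective y ∧
      Finset.univ.image x = V ∧ Finset.univ.image y = W ∧
      (∀ i, G.Adj (x i) (y i)) ∧
      (∀ i j, G.Adj (x i) (y j) → (i : ℕ) ≤ (j : ℕ)) ∧
      (∀ i j k, G.Adj (x i) (y j) → G.Adj (x j) (y k) → G.Adj (x i) (y k)) := by
  classical
  obtain ⟨hVW, hVWuniv, hbipadj⟩ := hbip
  -- all maximal independent sets have cardinality n
  have hMcard : ∀ M, MaxIndepSet G M → M.card = n := by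
    intro M hM
    have := hunmixed hM hVmax
    rwa [hV] at this
  have hWn : W.card = n := hMcard W hWmax
  have hcardF : ∀ k ≤ n, (F k).card = n := fun k hk => hMcard _ (hmax k hk)
  -- the swapped-out and swapped-in elements
  have hD : ∀ i : Fin n, ∃ a, F i \ F ((i : ℕ) + 1) = {a} := by
    intro i
    have hi : (i : ℕ) < n := i.isLt
    have h1 := hcardF i hi.le
    have h2 := hcard i hi
    have h3 := Finset.card_inter_add_card_sdiff (F i) (F ((i : ℕ) + 1))
    exact Finset.card_eq_one.mp (by omega)
  have hA : ∀ i : Fin n, ∃ b, F ((i : ℕ) + 1) \ F i = {b} := by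
    intro i
    have hi : (i : ℕ) < n := i.isLt
    have h1 := hcardF ((i : ℕ) + 1) hi
    have h2 := hcard i hi
    have h3 := Finset.card_inter_add_card_sdiff (F ((i : ℕ) + 1)) (F i)
    rw [Finset.inter_comm] at h3
    exact Finset.card_eq_one.mp (by omega)
  set x : Fin n → α := fun i => (hD i).choose with hxdef
  set y : Fin n → α := fun i => (hA i).choose with hydef
  have hxspec : ∀ i : Fin n, F i \ F ((i : ℕ) + 1) = {x i} := fun i => (hD i).choose_spec
  have hyspec : ∀ i : Fin n, F ((i : ℕ) + 1) \ F i = {y i} := fun i => (hA i).choose_spec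
  have hxFi : ∀ i : Fin n, x i ∈ F i ∧ x i ∉ F ((i : ℕ) + 1) := by
    intro i
    have : x i ∈ F i \ F ((i : ℕ) + 1) := by rw [hxspec i]; exact mem_singleton_self _
    exact ⟨(mem_sdiff.mp this).1, (mem_sdiff.mp this).2⟩
  have hyFi : ∀ i : Fin n, y i ∈ F ((i : ℕ) + 1) ∧ y i ∉ F i := by
    intro i
    have : y i ∈ F ((i : ℕ) + 1) \ F i := by rw [hyspec i]; exact mem_singleton_self _
    exact ⟨(mem_sdiff.mp this).1, (mem_sdiff.mp this).2⟩
  -- basic subset relations between consecutive F's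
  have hsub1 : ∀ i : Fin n, ∀ u, u ∈ F i → u ≠ x i → u ∈ F ((i : ℕ) + 1) := by
    intro i u hu hne
    by_contra hc
    have : u ∈ F i \ F ((i : ℕ) + 1) := mem_sdiff.mpr ⟨hu, hc⟩
    rw [hxspec i] at this
    exact hne (mem_singleton.mp this)
  have hsub2 : ∀ i : Fin n, ∀ u, u ∈ F ((i : ℕ) + 1) → u ≠ y i → u ∈ F i := by
    intro i u hu hne
    by_contra hc
    have : u ∈ F ((i : ℕ) + 1) \ F i := mem_sdiff.mpr ⟨hu, hc⟩
    rw [hyspec i] at this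
    exact hne (mem_singleton.mp this)
  -- counting the V- and W-parts of each F k
  have hpart : ∀ k ≤ n, (F k ∩ V).card + (F k ∩ W).card = n := by
    intro k hk
    have hdisj : Disjoint (F k ∩ V) (F k ∩ W) :=
      hVW.mono inter_subset_right inter_subset_right
    rw [← Finset.card_union_of_disjoint hdisj, ← Finset.inter_union_distrib_left,
      hVWuniv, Finset.inter_univ]
    exact hcardF k hk
  have hVlow : ∀ k ≤ n, n - k ≤ (F k ∩ V).card := by
    intro k
    induction k with
    | zero => intro _; rw [hF0, Finset.inter_self, hV]; omega
    | succ k ih =>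
      intro hk
      have hk' : k < n := hk
      have ihk := ih hk'.le
      set i : Fin n := ⟨k, hk'⟩ with hidef
      have hsub : (F k ∩ V).erase (x i) ⊆ F (k + 1) ∩ V := by
        intro u hu
        obtain ⟨hne, hu⟩ := Finset.mem_erase.mp hu
        exact mem_inter.mpr ⟨hsub1 i u (mem_inter.mp hu).1 hne, (mem_inter.mp hu).2⟩
      have h1 := Finset.card_le_card hsub
      have h2 := Finset.pred_card_le_card_erase (s := F k ∩ V) (a := x i)
      omega
  have hWup : ∀ k ≤ n, (F k ∩ W).card ≤ k := by
    intro k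
    induction k with
    | zero =>
      intro _
      rw [hF0]
      simp [Finset.disjoint_iff_inter_eq_empty.mp hVW]
    | succ k ih =>
      intro hk
      have hk' : k < n := hk
      set i : Fin n := ⟨k, hk'⟩ with hidef
      have hsub : F (k + 1) ∩ W ⊆ insert (y i) (F k ∩ W) := by
        intro u hu
        obtain ⟨hu1, hu2⟩ := mem_inter.mp hu
        by_cases hne : u = y i
        · exact mem_insert.mpr (Or.inl hne)
        · exact mem_insert.mpr (Or.inr (mem_inter.mpr ⟨hsub2 i u hu1 hne, hu2⟩))
      have h1 := Finset.card_le_card hsub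
      have h2 := Finset.card_insert_le (y i) (F k ∩ W)
      have := ih hk'.le
      omega
  -- downward induction: W-part is at least k
  have hWlowaux : ∀ j ≤ n, n - j ≤ (F (n - j) ∩ W).card := by
    intro j
    induction j with
    | zero => intro _; simp only [Nat.sub_zero]; rw [hFn, Finset.inter_self, hWn]
    | succ j ih =>
      intro hj
      have hj' : j < n := hj
      have ihj := ih hj'.le
      have hk' : n - (j + 1) < n := by omega
      set i : Fin n := ⟨n - (j + 1), hk'⟩ with hidef
      have hstep : (i : ℕ) + 1 = n - j := by simp only [hidef]; omega
      have hsub : F ((i : ℕ) + 1) ∩ W ⊆ insert (y i) (F i ∩ W) := by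
        intro u hu
        obtain ⟨hu1, hu2⟩ := mem_inter.mp hu
        by_cases hne : u = y i
        · exact mem_insert.mpr (Or.inl hne)
        · exact mem_insert.mpr (Or.inr (mem_inter.mpr ⟨hsub2 i u hu1 hne, hu2⟩))
      have h1 := Finset.card_le_card hsub
      have h2 := Finset.card_insert_le (y i) (F (i : ℕ) ∩ W)
      rw [hstep] at h1
      simp only [hidef] at h1 h2
      omega
  have hWcard : ∀ k ≤ n, (F k ∩ W).card = k := by
    intro k hk
    have h1 := hWup k hk
    have h2 := hWlowaux (n - k) (by omega)
    rw [show n - (n - k) = k by omega] at h2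
    omega
  have hVcard : ∀ k ≤ n, (F k ∩ V).card = n - k := by
    intro k hk
    have := hpart k hk
    have := hWcard k hk
    omega
  -- x i ∈ V and y i ∈ W
  have hxV : ∀ i : Fin n, x i ∈ V := by
    intro i
    by_contra hc
    have hsub : F (i : ℕ) ∩ V ⊆ F ((i : ℕ) + 1) ∩ V := by
      intro u hu
      obtain ⟨hu1, hu2⟩ := mem_inter.mp hu
      refine mem_inter.mpr ⟨hsub1 i u hu1 ?_, hu2⟩
      rintro rfl; exact hc hu2
    have h1 := Finset.card_le_card hsub
    have h2 := hVcard i i.isLt.le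
    have h3 := hVcard ((i : ℕ) + 1) i.isLt
    have := i.isLt
    omega
  have hyW : ∀ i : Fin n, y i ∈ W := by
    intro i
    by_contra hc
    have hsub : F ((i : ℕ) + 1) ∩ W ⊆ F (i : ℕ) ∩ W := by
      intro u hu
      obtain ⟨hu1, hu2⟩ := mem_inter.mp hu
      refine mem_inter.mpr ⟨hsub2 i u hu1 ?_, hu2⟩
      rintro rfl; exact hc hu2
    have h1 := Finset.card_le_card hsub
    have h2 := hWcard i i.isLt.le
    have h3 := hWcard ((i : ℕ) + 1) i.isLt
    omega
  -- monotonicity of the V- and W-parts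
  have hantiV : ∀ k l, k ≤ l → l ≤ n → F l ∩ V ⊆ F k ∩ V := by
    intro k l hkl
    induction l, hkl using Nat.le_induction with
    | base => intro _; exact subset_rfl
    | succ l hkl ih =>
      intro hl
      have hl' : l < n := hl
      set i : Fin n := ⟨l, hl'⟩ with hidef
      refine Finset.Subset.trans ?_ (ih hl'.le)
      intro u hu
      obtain ⟨hu1, hu2⟩ := mem_inter.mp hu
      refine mem_inter.mpr ⟨hsub2 i u hu1 ?_, hu2⟩
      rintro rfl
      exact (Finset.disjoint_left.mp hVW) hu2 (hyW i)
  have hmonoW : ∀ k l, k ≤ l → l ≤ n → F k ∩ W ⊆ F l ∩ W := by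
    intro k l hkl
    induction l, hkl using Nat.le_induction with
    | base => intro _; exact subset_rfl
    | succ l hkl ih =>
      intro hl
      have hl' : l < n := hl
      set i : Fin n := ⟨l, hl'⟩ with hidef
      refine Finset.Subset.trans (ih hl'.le) ?_
      intro u hu
      obtain ⟨hu1, hu2⟩ := mem_inter.mp hu
      refine mem_inter.mpr ⟨hsub1 i u hu1 ?_, hu2⟩
      rintro rfl
      exact (Finset.disjoint_left.mp hVW) (hxV i) hu2
  -- membership characterizations
  have hxmemF : ∀ (i : Fin n) (k), k ≤ n → (x i ∈ F k ↔ k ≤ (i : ℕ)) := by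
    intro i k hk
    constructor
    · intro hmem
      by_contra hc
      push_neg at hc
      have : x i ∈ F ((i : ℕ) + 1) ∩ V :=
        hantiV ((i : ℕ) + 1) k hc hk (mem_inter.mpr ⟨hmem, hxV i⟩)
      exact (hxFi i).2 (mem_inter.mp this).1
    · intro hki
      have : x i ∈ F k ∩ V :=
        hantiV k i hki i.isLt.le (mem_inter.mpr ⟨(hxFi i).1, hxV i⟩)
      exact (mem_inter.mp this).1
  have hymemF : ∀ (i : Fin n) (k), k ≤ n → (y i ∈ F k ↔ (i : ℕ) + 1 ≤ k) := by
    intro i k hk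
    constructor
    · intro hmem
      by_contra hc
      push_neg at hc
      have : y i ∈ F (i : ℕ) ∩ W :=
        hmonoW k (i : ℕ) (by omega) i.isLt.le (mem_inter.mpr ⟨hmem, hyW i⟩)
      exact (hyFi i).2 (mem_inter.mp this).1
    · intro hki
      have : y i ∈ F k ∩ W :=
        hmonoW ((i : ℕ) + 1) k hki hk (mem_inter.mpr ⟨(hyFi i).1, hyW i⟩)
      exact (mem_inter.mp this).1
  -- injectivity
  have hxinj : Function.Injective x := by
    intro i j hij
    have h1 : x j ∈ F (i : ℕ) := hij ▸ (hxFi i).1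
    have h2 : x i ∈ F (j : ℕ) := hij.symm ▸ (hxFi j).1
    have h3 := (hxmemF j (i : ℕ) i.isLt.le).mp h1
    have h4 := (hxmemF i (j : ℕ) j.isLt.le).mp h2
    exact Fin.ext (le_antisymm h3 h4)
  have hyinj : Function.Injective y := by
    intro i j hij
    have h1 : y j ∈ F ((i : ℕ) + 1) := hij ▸ (hyFi i).1
    have h2 : y i ∈ F ((j : ℕ) + 1) := hij.symm ▸ (hyFi j).1
    have h3 := (hymemF j ((i : ℕ) + 1) i.isLt).mp h1
    have h4 := (hymemF i ((j : ℕ) + 1) j.isLt).mp h2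
    exact Fin.ext (by omega)
  -- images
  have himgx : Finset.univ.image x = V := by
    apply Finset.eq_of_subset_of_card_le
    · intro u hu
      obtain ⟨i, _, rfl⟩ := mem_image.mp hu
      exact hxV i
    · rw [hV, Finset.card_image_of_injective _ hxinj, Finset.card_univ, Fintype.card_fin]
  have himgy : Finset.univ.image y = W := by
    apply Finset.eq_of_subset_of_card_le
    · intro u hu
      obtain ⟨i, _, rfl⟩ := mem_image.mp hu
      exact hyW i
    · rw [hWn, Finset.card_image_of_injective _ hyinj, Finset.card_univ, Fintype.card_fin]
  -- (i): x i and y i are adjacent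
  have hedge : ∀ i : Fin n, G.Adj (x i) (y i) := by
    intro i
    by_contra hna
    have hindep : IndepSet G (insert (y i) (F (i : ℕ))) := by
      intro u hu v hv hadj
      rcases mem_insert.mp hu with hu | hu <;> rcases mem_insert.mp hv with hv | hv
      · subst hu; subst hv; exact G.irrefl hadj
      · subst hu
        by_cases hvF : v ∈ F ((i : ℕ) + 1)
        · exact (hmax ((i : ℕ) + 1) i.isLt).1 (hyFi i).1 hvF hadj
        · have : v = x i := by
            by_contra hne
            exact hvF (hsub1 i v hv hne)
          subst this
          exact hna hadj.symm
      · subst hv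
        by_cases huF : u ∈ F ((i : ℕ) + 1)
        · exact (hmax ((i : ℕ) + 1) i.isLt).1 huF (hyFi i).1 hadj
        · have : u = x i := by
            by_contra hne
            exact huF (hsub1 i u hu hne)
          subst this
          exact hna hadj
      · exact (hmax (i : ℕ) i.isLt.le).1 hu hv hadj
    have heq := (hmax (i : ℕ) i.isLt.le).2 hindep (Finset.subset_insert _ _)
    have : y i ∈ F (i : ℕ) := heq ▸ Finset.mem_insert_self _ _
    exact (hyFi i).2 this
  -- (ii): edges go up
  have hup : ∀ i j : Fin n, G.Adj (x i) (y j) → (i : ℕ) ≤ (j : ℕ) := by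
    intro i j hadj
    by_contra hc
    push_neg at hc
    have h1 : x i ∈ F (i : ℕ) := (hxFi i).1
    have h2 : y j ∈ F (i : ℕ) := (hymemF j (i : ℕ) i.isLt.le).mpr (by omega)
    exact (hmax (i : ℕ) i.isLt.le).1 h1 h2 hadj
  -- pair lemma: every maximal independent set meets every pair {x j, y j}
  have hpair : ∀ M, MaxIndepSet G M → ∀ j : Fin n, x j ∈ M ∨ y j ∈ M := by
    intro M hM j
    by_contra hcon
    push_neg at hcon
    have hMn : M.card = n := hMcard M hM
    have hcover : M = Finset.univ.biUnion (fun t : Fin n => M ∩ {x t, y t}) := by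
      apply Finset.Subset.antisymm
      · intro m hm
        have hmem : m ∈ V ∪ W := by rw [hVWuniv]; exact mem_univ m
        rcases mem_union.mp hmem with h | h
        · rw [← himgx] at h
          obtain ⟨t, _, ht⟩ := mem_image.mp h
          exact mem_biUnion.mpr ⟨t, mem_univ t,
            mem_inter.mpr ⟨hm, by simp [← ht]⟩⟩
        · rw [← himgy] at h
          obtain ⟨t, _, ht⟩ := mem_image.mp h
          exact mem_biUnion.mpr ⟨t, mem_univ t,
            mem_inter.mpr ⟨hm, by simp [← ht]⟩⟩
      · intro m hm
        obtain ⟨t, _, ht⟩ := mem_biUnion.mp hm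
        exact (mem_inter.mp ht).1
    have hdisjp : ∀ s ∈ (Finset.univ : Finset (Fin n)), ∀ t ∈ (Finset.univ : Finset (Fin n)),
        s ≠ t → Disjoint (M ∩ {x s, y s}) (M ∩ {x t, y t}) := by
      intro s _ t _ hst
      rw [Finset.disjoint_left]
      intro u hus hut
      have h1 : u = x s ∨ u = y s := by simpa using (mem_inter.mp hus).2
      have h2 : u = x t ∨ u = y t := by simpa using (mem_inter.mp hut).2
      rcases h1 with h1 | h1 <;> rcases h2 with h2 | h2
      · exact hst (hxinj (h1 ▸ h2))
      · subst h1
        exact (Finset.disjoint_left.mp hVW) (hxV s) (h2 ▸ hyW t)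
      · subst h1
        exact (Finset.disjoint_left.mp hVW) (h2 ▸ hxV t) (hyW s)
      · exact hst (hyinj (h1 ▸ h2))
    have hsum : M.card = ∑ t : Fin n, (M ∩ {x t, y t}).card := by
      conv_lhs => rw [hcover]
      exact Finset.card_biUnion hdisjp
    have hle1 : ∀ t : Fin n, (M ∩ {x t, y t}).card ≤ 1 := by
      intro t
      apply Finset.card_le_one.mpr
      intro a ha b hb
      have h1 : a = x t ∨ a = y t := by simpa using (mem_inter.mp ha).2
      have h2 : b = x t ∨ b = y t := by simpa using (mem_inter.mp hb).2
      rcases h1 with h1 | h1 <;> rcases h2 with h2 | h2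
      · rw [h1, h2]
      · exact absurd ((h1 ▸ h2 ▸ hedge t : G.Adj a b)) (hM.1 (mem_inter.mp ha).1 (mem_inter.mp hb).1)
      · exact absurd ((h2 ▸ h1 ▸ hedge t : G.Adj b a)) (hM.1 (mem_inter.mp hb).1 (mem_inter.mp ha).1)
      · rw [h1, h2]
    have hj0 : (M ∩ {x j, y j}).card = 0 := by
      rw [Finset.card_eq_zero, Finset.eq_empty_iff_forall_notMem]
      intro u hu
      have h1 : u = x j ∨ u = y j := by simpa using (mem_inter.mp hu).2
      rcases h1 with h1 | h1
      · exact hcon.1 (h1 ▸ (mem_inter.mp hu).1)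
      · exact hcon.2 (h1 ▸ (mem_inter.mp hu).1)
    have hsplit : ∑ t ∈ Finset.univ.erase j, (M ∩ {x t, y t}).card +
        (M ∩ {x j, y j}).card = ∑ t : Fin n, (M ∩ {x t, y t}).card :=
      Finset.sum_erase_add _ _ (Finset.mem_univ j)
    have hbound : ∑ t ∈ Finset.univ.erase j, (M ∩ {x t, y t}).card ≤
        (Finset.univ.erase j).card := by
      calc ∑ t ∈ Finset.univ.erase j, (M ∩ {x t, y t}).card
          ≤ ∑ _t ∈ Finset.univ.erase j, 1 := Finset.sum_le_sum (fun t _ => hle1 t)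
        _ = (Finset.univ.erase j).card := by rw [Finset.sum_const, smul_eq_mul, mul_one]
    have hcarde : (Finset.univ.erase j).card = n - 1 := by
      rw [Finset.card_erase_of_mem (Finset.mem_univ j), Finset.card_univ, Fintype.card_fin]
    have hnpos : 0 < n := j.pos
    omega
  -- (iii): transitivity of edges
  refine ⟨hWn, x, y, hxinj, hyinj, himgx, himgy, hedge, hup, ?_⟩
  intro i j k hij hjk
  by_contra hc
  have hindep : IndepSet G ({x i, y k} : Finset α) := by
    intro u hu v hv hadj
    have h1 : u = x i ∨ u = y k := by simpa using hu
    have h2 : v = x i ∨ v = y k := by simpa using hv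
    rcases h1 with h1 | h1 <;> rcases h2 with h2 | h2
    · subst h1; subst h2; exact G.irrefl hadj
    · subst h1; subst h2; exact hc hadj
    · subst h1; subst h2; exact hc hadj.symm
    · subst h1; subst h2; exact G.irrefl hadj
  obtain ⟨M, hM, hSM⟩ := exists_maxIndepSet_superset G _ hindep
  have hxiM : x i ∈ M := hSM (by simp)
  have hykM : y k ∈ M := hSM (by simp)
  have hyjM : y j ∉ M := fun h => hM.1 hxiM h hij
  have hxjM : x j ∈ M := (hpair M hM j).resolve_right hyjM
  exact hM.1 hxjM hykM hjk
end

section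
/- Let G be a finite simple graph that is bipartite with bipartition (V, W), with |V| = |W| = n ≥ 1, and suppose there exist maximal independent sets F_0 = V, F_1, …, F_n = W of G with |F_i ∩ F_{i+1}| = n − 1 for every i. Let G₁ be the graph obtained from G by adding two new vertices x' and y' and the single new edge {x', y'}. Then G₁ is bipartite with bipartition (V ∪ {x'}, W ∪ {y'}) and there exist maximal independent sets F'_0 = V ∪ {x'}, F'_1, …, F'_{n+1} = W ∪ {y'} of G₁ with |F'_i ∩ F'_{i+1}| = n for every i = 0,…,n; indeed one may take F'_i = F_i ∪ {x'} for i = 0,…,n and F'_{n+1} = F_n ∪ {y'}. -/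
/-- Remark 1.10 (converse construction): let `G` be bipartite with bipartition `(V, W)`,
`|V| = |W| = n`, carrying a chain of maximal independent sets `V = F₀, …, Fₙ = W` with
consecutive intersections of cardinality `n - 1`. Let `G₁` be obtained from `G` by
adding the two new vertices `x' = Sum.inr false`, `y' = Sum.inr true` and the single new
edge `{x', y'}`. Then `G₁` is bipartite with bipartition `(V ∪ {x'}, W ∪ {y'})` and the
sets `F'ᵢ = Fᵢ ∪ {x'}` (for `i ≤ n`) and `F'_{n+1} = Fₙ ∪ {y'}` form a chain of maximal
independent sets from `V ∪ {x'}` to `W ∪ {y'}` with consecutive intersections of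
cardinality `n`. -/
theorem chain_of_add_disjoint_edge {α : Type*} [Fintype α] [DecidableEq α]
    (G : SimpleGraph α) (V W : Finset α) (n : ℕ) (hn : 1 ≤ n)
    (hbip : IsBipartition G V W) (hV : V.card = n) (hW : W.card = n)
    (F : ℕ → Finset α)
    (hF0 : F 0 = V) (hFn : F n = W)
    (hmax : ∀ i ≤ n, MaxIndepSet G (F i))
    (hcard : ∀ i < n, (F i ∩ F (i + 1)).card = n - 1)
    (G₁ : SimpleGraph (α ⊕ Bool))
    (hG₁ : ∀ u v : α ⊕ Bool, G₁.Adj u v ↔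
      ((∃ a b : α, u = Sum.inl a ∧ v = Sum.inl b ∧ G.Adj a b) ∨
       (u = Sum.inr false ∧ v = Sum.inr true) ∨
       (u = Sum.inr true ∧ v = Sum.inr false)))
    (F' : ℕ → Finset (α ⊕ Bool))
    (hF' : ∀ i ≤ n, F' i = (F i).image Sum.inl ∪ {Sum.inr false})
    (hF'top : F' (n + 1) = (F n).image Sum.inl ∪ {Sum.inr true}) :
    IsBipartition G₁ (V.image Sum.inl ∪ {Sum.inr false}) (W.image Sum.inl ∪ {Sum.inr true}) ∧
    F' 0 = V.image Sum.inl ∪ {Sum.inr false} ∧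
    F' (n + 1) = W.image Sum.inl ∪ {Sum.inr true} ∧
    (∀ i ≤ n + 1, MaxIndepSet G₁ (F' i)) ∧
    ∀ i ≤ n, (F' i ∩ F' (i + 1)).card = n := by
  obtain ⟨hdisj, huniv, hadj⟩ := hbip
  -- independence transfer
  have hindep : ∀ (S : Finset α) (b : Bool), IndepSet G S →
      IndepSet G₁ (S.image Sum.inl ∪ {Sum.inr b}) := by
    intro S b hS u hu v hv hA
    rw [hG₁] at hA
    simp only [Finset.mem_union, Finset.mem_image, Finset.mem_singleton] at hu hv
    rcases hA with ⟨a, c, rfl, rfl, hac⟩ | ⟨rfl, rfl⟩ | ⟨rfl, rfl⟩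
    · rcases hu with ⟨a', ha', h⟩ | h
      · rcases hv with ⟨c', hc', h'⟩ | h'
        · cases Sum.inl_injective h; cases Sum.inl_injective h'
          exact hS ha' hc' hac
        · exact nomatch h'
      · exact nomatch h
    · rcases hu with ⟨a', _, h⟩ | h
      · exact nomatch h
      · rcases hv with ⟨c', _, h'⟩ | h'
        · exact nomatch h'
        · cases Sum.inr_injective h; cases Sum.inr_injective h'
    · rcases hu with ⟨a', _, h⟩ | h
      · exact nomatch h
      · rcases hv with ⟨c', _, h'⟩ | h'
        · exact nomatch h'
        · cases Sum.inr_injective h; cases Sum.inr_injective h'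
  have hmaxS : ∀ (S : Finset α) (b : Bool), MaxIndepSet G S →
      MaxIndepSet G₁ (S.image Sum.inl ∪ {Sum.inr b}) := by
    intro S b ⟨hSi, hSm⟩
    refine ⟨hindep S b hSi, fun T hT hsub => ?_⟩
    set T' : Finset α := Finset.univ.filter (fun a => Sum.inl a ∈ T) with hT'
    have hT'i : IndepSet G T' := by
      intro u hu v hv hA
      simp only [hT', Finset.mem_filter] at hu hv
      exact hT hu.2 hv.2 ((hG₁ _ _).2 (Or.inl ⟨u, v, rfl, rfl, hA⟩))
    have hST' : S ⊆ T' := by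
      intro a ha
      simp only [hT', Finset.mem_filter, Finset.mem_univ, true_and]
      exact hsub (Finset.mem_union_left _ (Finset.mem_image_of_mem _ ha))
    have hTS : T' = S := hSm hT'i hST'
    have hbmem : Sum.inr b ∈ T :=
      hsub (Finset.mem_union_right _ (Finset.mem_singleton_self _))
    apply Finset.Subset.antisymm _ hsub
    intro x hx
    rcases x with a | c
    · have : a ∈ T' := by simp [hT', hx]
      rw [hTS] at this
      exact Finset.mem_union_left _ (Finset.mem_image_of_mem _ this)
    · by_cases hc : c = b
      · subst hc; exact Finset.mem_union_right _ (Finset.mem_singleton_self _)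
      · exfalso
        rcases Bool.eq_false_or_eq_true b with rfl | rfl
        · have hc' : c = false := by
            cases c
            · rfl
            · exact absurd rfl hc
          subst hc'
          exact hT hx hbmem ((hG₁ _ _).2 (Or.inr (Or.inl ⟨rfl, rfl⟩)))
        · have hc' : c = true := by
            cases c
            · exact absurd rfl hc
            · rfl
          subst hc'
          exact hT hx hbmem ((hG₁ _ _).2 (Or.inr (Or.inr ⟨rfl, rfl⟩)))
  have hfalse_notin : ∀ S : Finset α, (Sum.inr false : α ⊕ Bool) ∉ S.image Sum.inl := by
    intro S h; simp at h
  have htrue_notin : ∀ S : Finset α, (Sum.inr true : α ⊕ Bool) ∉ S.image Sum.inl := by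
    intro S h; simp at h
  refine ⟨⟨?_, ?_, ?_⟩, ?_, ?_, ?_, ?_⟩
  · -- disjointness
    rw [Finset.disjoint_left]
    intro x hx hx'
    simp only [Finset.mem_union, Finset.mem_image, Finset.mem_singleton] at hx hx'
    rcases hx with ⟨a, ha, rfl⟩ | rfl
    · rcases hx' with ⟨c, hc, h⟩ | h
      · cases Sum.inl_injective h
        exact (Finset.disjoint_left.1 hdisj) ha hc
      · exact nomatch h
    · rcases hx' with ⟨c, hc, h⟩ | h
      · exact nomatch h
      · exact Bool.noConfusion (Sum.inr_injective h)
  · -- union is univ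
    ext x
    simp only [Finset.mem_union, Finset.mem_image, Finset.mem_singleton, Finset.mem_univ,
      iff_true]
    rcases x with a | c
    · have : a ∈ V ∪ W := by rw [huniv]; exact Finset.mem_univ a
      rcases Finset.mem_union.1 this with h | h
      · exact Or.inl (Or.inl ⟨a, h, rfl⟩)
      · exact Or.inr (Or.inl ⟨a, h, rfl⟩)
    · cases c
      · exact Or.inl (Or.inr rfl)
      · exact Or.inr (Or.inr rfl)
  · -- adjacency
    intro u v hA
    rw [hG₁] at hA
    rcases hA with ⟨a, c, rfl, rfl, hac⟩ | ⟨rfl, rfl⟩ | ⟨rfl, rfl⟩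
    · rcases hadj hac with ⟨h1, h2⟩ | ⟨h1, h2⟩
      · exact Or.inl ⟨Finset.mem_union_left _ (Finset.mem_image_of_mem _ h1),
          Finset.mem_union_left _ (Finset.mem_image_of_mem _ h2)⟩
      · exact Or.inr ⟨Finset.mem_union_left _ (Finset.mem_image_of_mem _ h1),
          Finset.mem_union_left _ (Finset.mem_image_of_mem _ h2)⟩
    · exact Or.inl ⟨Finset.mem_union_right _ (Finset.mem_singleton_self _),
        Finset.mem_union_right _ (Finset.mem_singleton_self _)⟩
    · exact Or.inr ⟨Finset.mem_union_right _ (Finset.mem_singleton_self _),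
        Finset.mem_union_right _ (Finset.mem_singleton_self _)⟩
  · rw [hF' 0 (Nat.zero_le n), hF0]
  · rw [hF'top, hFn]
  · -- maximality
    intro i hi
    rcases Nat.lt_or_ge i (n + 1) with h | h
    · rw [hF' i (Nat.lt_succ_iff.1 h)]
      exact hmaxS _ _ (hmax i (Nat.lt_succ_iff.1 h))
    · have : i = n + 1 := le_antisymm hi h
      subst this
      rw [hF'top]
      exact hmaxS _ _ (hmax n le_rfl)
  · -- cardinalities
    intro i hi
    rcases Nat.lt_or_ge i n with h | h
    · rw [hF' i (le_of_lt h), hF' (i + 1) h]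
      have himg : ((F i).image Sum.inl : Finset (α ⊕ Bool)) ∩ (F (i + 1)).image Sum.inl
          = ((F i) ∩ (F (i + 1))).image Sum.inl :=
        (Finset.image_inter (f := Sum.inl) (F i) (F (i + 1)) Sum.inl_injective).symm
      rw [Finset.union_inter_distrib_right, Finset.inter_union_distrib_left,
        Finset.inter_union_distrib_left]
      have h1 : (F i).image Sum.inl ∩ ({Sum.inr false} : Finset (α ⊕ Bool)) = ∅ := by
        rw [Finset.inter_singleton_of_notMem (hfalse_notin _)]
      have h2 : ({Sum.inr false} : Finset (α ⊕ Bool)) ∩ (F (i+1)).image Sum.inl = ∅ := by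
        rw [Finset.singleton_inter_of_notMem (hfalse_notin _)]
      rw [h1, h2, himg, Finset.union_empty, Finset.empty_union, Finset.inter_self]
      have hdis : Disjoint ((F i ∩ F (i+1)).image Sum.inl) ({Sum.inr false} : Finset (α ⊕ Bool)) := by
        simp [Finset.disjoint_singleton_right]
      rw [Finset.card_union_of_disjoint hdis]
      rw [Finset.card_image_of_injective _ Sum.inl_injective, hcard i h,
        Finset.card_singleton]
      omega
    · have hin : i = n := le_antisymm hi h
      rw [hin, hF' n le_rfl, hF'top]
      rw [Finset.union_inter_distrib_right, Finset.inter_union_distrib_left,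
        Finset.inter_union_distrib_left]
      have h1 : (F n).image Sum.inl ∩ ({Sum.inr true} : Finset (α ⊕ Bool)) = ∅ := by
        rw [Finset.inter_singleton_of_notMem (htrue_notin _)]
      have h2 : ({Sum.inr false} : Finset (α ⊕ Bool)) ∩ (F n).image Sum.inl = ∅ := by
        rw [Finset.singleton_inter_of_notMem (hfalse_notin _)]
      have h3 : ({Sum.inr false} : Finset (α ⊕ Bool)) ∩ ({Sum.inr true} : Finset (α ⊕ Bool)) = ∅ := by
        simp
      rw [h1, h2, h3, Finset.inter_self, Finset.union_empty, Finset.union_empty,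
        Finset.union_empty, Finset.card_image_of_injective _ Sum.inl_injective, hFn, hW]
end

section
/- For every n ≥ 3, the cycle graph C_n on n vertices is unmixed (all maximal independent sets of C_n have the same cardinality) if and only if n ∈ {3, 4, 5, 7}. -/
instance {α : Type*} [Fintype α] [DecidableEq α] (G : SimpleGraph α) [DecidableRel G.Adj]
    (S : Finset α) : Decidable (IndepSet G S) :=
  inferInstanceAs (Decidable (∀ u, u ∈ S → ∀ v, v ∈ S → ¬ G.Adj u v))

instance {α : Type*} [Fintype α] [DecidableEq α] (G : SimpleGraph α) [DecidableRel G.Adj]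
    (S : Finset α) : Decidable (MaxIndepSet G S) :=
  inferInstanceAs (Decidable (IndepSet G S ∧ ∀ T : Finset α, IndepSet G T → S ⊆ T → T = S))

lemma unmixed_of_card {α : Type*} (G : SimpleGraph α) (c : ℕ)
    (h : ∀ S, MaxIndepSet G S → S.card = c) : Unmixed G := by
  intro S T hS hT
  rw [h S hS, h T hT]

namespace CycleAux

variable {n : ℕ}

/-- Nat-level criterion for adjacency in the cycle graph. -/
lemma cg_adj_nat (hn : 2 ≤ n) (a b : ℕ) (ha : a < n) (hb : b < n)
    (h : b = a + 1 ∨ a = b + 1 ∨ (a + 1 = n ∧ b = 0) ∨ (b + 1 = n ∧ a = 0)) :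
    (SimpleGraph.cycleGraph n).Adj ⟨a, ha⟩ ⟨b, hb⟩ := by
  haveI : NeZero n := ⟨by omega⟩
  have h1 : (1 : Fin n).val = 1 := by
    rw [Fin.val_one']
    exact Nat.mod_eq_of_lt (by omega)
  rw [SimpleGraph.cycleGraph_adj']
  have key : ∀ (x y : ℕ) (hx : x < n) (hy : y < n), y = (x + 1) % n →
      ((⟨y, hy⟩ : Fin n) - ⟨x, hx⟩).val = 1 := by
    intro x y hx hy hxy
    have : (⟨y, hy⟩ : Fin n) = ⟨x, hx⟩ + 1 := by
      apply Fin.ext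
      rw [Fin.add_def, h1]
      exact hxy
    rw [this, add_sub_cancel_left, h1]
  rcases h with h | h | ⟨h1', h2'⟩ | ⟨h1', h2'⟩
  · exact Or.inr (key a b ha hb (by rw [Nat.mod_eq_of_lt (by omega)]; omega))
  · exact Or.inl (key b a hb ha (by rw [Nat.mod_eq_of_lt (by omega)]; omega))
  · exact Or.inr (key a b ha hb (by rw [h1', Nat.mod_self]; omega))
  · exact Or.inl (key b a hb ha (by rw [h2', h1', Nat.mod_self]))

/-- Nat-level consequence of adjacency in the cycle graph. -/
lemma sub_val_one (hn : 2 ≤ n) {a b : Fin n} (h : (a - b).val = 1) :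
    a.val = b.val + 1 ∨ (b.val = n - 1 ∧ a.val = 0) := by
  rw [Fin.sub_def] at h
  have h' : (n - b.val + a.val) % n = 1 := h
  have ha := a.isLt
  have hb := b.isLt
  rcases Nat.lt_or_ge (n - b.val + a.val) n with hc | hc
  · rw [Nat.mod_eq_of_lt hc] at h'
    omega
  · rw [Nat.mod_eq_sub_mod hc, Nat.mod_eq_of_lt (by omega)] at h'
    omega

lemma adj_val {u v : Fin n} (hn : 2 ≤ n) (h : (SimpleGraph.cycleGraph n).Adj u v) :
    u.val = v.val + 1 ∨ v.val = u.val + 1 ∨ (v.val = n - 1 ∧ u.val = 0) ∨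
      (u.val = n - 1 ∧ v.val = 0) := by
  rw [SimpleGraph.cycleGraph_adj'] at h
  rcases h with h | h
  · rcases sub_val_one hn h with h | h
    · exact Or.inl h
    · exact Or.inr (Or.inr (Or.inl h))
  · rcases sub_val_one hn h with h | h
    · exact Or.inr (Or.inl h)
    · exact Or.inr (Or.inr (Or.inr h))

lemma maxIndep_of (S : Finset (Fin n)) (indep : IndepSet (SimpleGraph.cycleGraph n) S)
    (dom : ∀ w : Fin n, w ∉ S → ∃ x ∈ S, (SimpleGraph.cycleGraph n).Adj x w) :
    MaxIndepSet (SimpleGraph.cycleGraph n) S := by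
  refine ⟨indep, fun T hT hST => ?_⟩
  apply Finset.Subset.antisymm _ hST
  intro w hw
  by_contra hw'
  obtain ⟨x, hx, hadj⟩ := dom w hw'
  exact hT (hST hx) hw hadj

/-- The big maximal independent set: even values below `n - 1`. -/
def S1 (n : ℕ) : Finset (Fin n) :=
  (((Finset.range (n / 2)).image (fun j => 2 * j)).attachFin (by
    intro m hm
    simp only [Finset.mem_image, Finset.mem_range] at hm
    omega))

lemma mem_S1 {i : Fin n} : i ∈ S1 n ↔ i.val % 2 = 0 ∧ i.val + 1 < n := by
  rw [S1, Finset.mem_attachFin]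
  simp only [Finset.mem_image, Finset.mem_range]
  constructor
  · rintro ⟨j, hj, hji⟩; omega
  · rintro ⟨h1, h2⟩; exact ⟨i.val / 2, by omega, by omega⟩

lemma mem_S1_mk {a : ℕ} (ha : a < n) :
    (⟨a, ha⟩ : Fin n) ∈ S1 n ↔ a % 2 = 0 ∧ a + 1 < n := mem_S1

lemma card_S1 : (S1 n).card = n / 2 := by
  rw [S1, Finset.card_attachFin,
    Finset.card_image_of_injective _ (fun a b h => by omega), Finset.card_range]

lemma max_S1 (hn : 3 ≤ n) : MaxIndepSet (SimpleGraph.cycleGraph n) (S1 n) := by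
  apply maxIndep_of
  · intro u hu v hv hadj
    rw [mem_S1] at hu hv
    rcases adj_val (by omega) hadj with h | h | h | h <;> omega
  · intro w hw
    rw [mem_S1] at hw
    push_neg at hw
    have hwn := w.isLt
    by_cases hpar : w.val % 2 = 0
    · -- then w.val + 1 = n (with n odd); neighbor 0
      have hw1 : w.val + 1 = n := by have := hw hpar; omega
      refine ⟨⟨0, by omega⟩, ?_, ?_⟩
      · rw [mem_S1_mk]
        omega
      · exact cg_adj_nat (by omega) 0 w.val (by omega) hwn (by omega)
    · -- w.val odd; neighbor w - 1
      refine ⟨⟨w.val - 1, by omega⟩, ?_, ?_⟩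
      · rw [mem_S1_mk]
        omega
      · exact cg_adj_nat (by omega) (w.val - 1) w.val (by omega) hwn (by omega)

/-- Small maximal independent set when `3 ∣ n`: multiples of 3. -/
def S2b (n : ℕ) : Finset (Fin n) :=
  (((Finset.range (n / 3)).image (fun j => 3 * j)).attachFin (by
    intro m hm
    simp only [Finset.mem_image, Finset.mem_range] at hm
    omega))

lemma mem_S2b (h3 : n % 3 = 0) {i : Fin n} : i ∈ S2b n ↔ i.val % 3 = 0 := by
  rw [S2b, Finset.mem_attachFin]
  simp only [Finset.mem_image, Finset.mem_range]
  have := i.isLt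
  constructor
  · rintro ⟨j, hj, hji⟩; omega
  · intro h1; exact ⟨i.val / 3, by omega, by omega⟩

lemma mem_S2b_mk (h3 : n % 3 = 0) {a : ℕ} (ha : a < n) :
    (⟨a, ha⟩ : Fin n) ∈ S2b n ↔ a % 3 = 0 := mem_S2b h3

lemma card_S2b : (S2b n).card = n / 3 := by
  rw [S2b, Finset.card_attachFin,
    Finset.card_image_of_injective _ (fun a b h => by omega), Finset.card_range]

lemma max_S2b (hn : 6 ≤ n) (h3 : n % 3 = 0) :
    MaxIndepSet (SimpleGraph.cycleGraph n) (S2b n) := by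
  apply maxIndep_of
  · intro u hu v hv hadj
    rw [mem_S2b h3] at hu hv
    have hun := u.isLt
    have hvn := v.isLt
    rcases adj_val (by omega) hadj with h | h | h | h <;> omega
  · intro w hw
    rw [mem_S2b h3] at hw
    have hwn := w.isLt
    have hweq : w = ⟨w.val, hwn⟩ := rfl
    rcases Nat.lt_or_ge (w.val % 3) 2 with h1 | h2
    · -- w.val % 3 = 1; neighbor w - 1
      refine ⟨⟨w.val - 1, by omega⟩, ?_, ?_⟩
      · rw [mem_S2b_mk h3]; omega
      · exact cg_adj_nat (by omega) (w.val - 1) w.val (by omega) hwn (by omega)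
    · rcases Nat.lt_or_ge (w.val + 1) n with h | h
      · -- neighbor w + 1
        refine ⟨⟨w.val + 1, h⟩, ?_, ?_⟩
        · rw [mem_S2b_mk h3]; omega
        · exact cg_adj_nat (by omega) (w.val + 1) w.val h hwn (by omega)
      · -- w = n - 1, neighbor 0
        refine ⟨⟨0, by omega⟩, ?_, ?_⟩
        · rw [mem_S2b_mk h3]
        · exact cg_adj_nat (by omega) 0 w.val (by omega) hwn (by omega)

/-- Small maximal independent set when `3 ∤ n`: multiples of 3 up to `n - 4`, plus `n - 2`. -/
def S2a (n : ℕ) (hn : 6 ≤ n) : Finset (Fin n) :=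
  ((insert (n - 2) ((Finset.range ((n - 4) / 3 + 1)).image (fun j => 3 * j))).attachFin (by
    intro m hm
    simp only [Finset.mem_insert, Finset.mem_image, Finset.mem_range] at hm
    omega))

lemma mem_S2a (hn : 6 ≤ n) {i : Fin n} :
    i ∈ S2a n hn ↔ i.val = n - 2 ∨ (i.val % 3 = 0 ∧ i.val + 4 ≤ n) := by
  rw [S2a, Finset.mem_attachFin]
  simp only [Finset.mem_insert, Finset.mem_image, Finset.mem_range]
  constructor
  · rintro (h | ⟨j, hj, hji⟩)
    · exact Or.inl h
    · right; omega
  · rintro (h | ⟨h1, h2⟩)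
    · exact Or.inl h
    · right; exact ⟨i.val / 3, by omega, by omega⟩

lemma mem_S2a_mk (hn : 6 ≤ n) {a : ℕ} (ha : a < n) :
    (⟨a, ha⟩ : Fin n) ∈ S2a n hn ↔ a = n - 2 ∨ (a % 3 = 0 ∧ a + 4 ≤ n) := mem_S2a hn

lemma card_S2a (hn : 6 ≤ n) : (S2a n hn).card = (n - 4) / 3 + 2 := by
  rw [S2a, Finset.card_attachFin, Finset.card_insert_of_notMem,
    Finset.card_image_of_injective _ (fun a b h => by omega), Finset.card_range]
  simp only [Finset.mem_image, Finset.mem_range]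
  rintro ⟨j, hj, hj2⟩
  omega

lemma max_S2a (hn : 8 ≤ n) (h3 : n % 3 ≠ 0) :
    MaxIndepSet (SimpleGraph.cycleGraph n) (S2a n (by omega)) := by
  have h3' : n % 3 = 1 ∨ n % 3 = 2 := by omega
  apply maxIndep_of
  · intro u hu v hv hadj
    rw [mem_S2a] at hu hv
    have hun := u.isLt
    have hvn := v.isLt
    rcases adj_val (by omega) hadj with h | h | h | h <;> omega
  · intro w hw
    rw [mem_S2a] at hw
    push_neg at hw
    obtain ⟨hw2, hw3⟩ := hw
    have hwn := w.isLt
    have hweq : w = ⟨w.val, hwn⟩ := rfl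
    rcases Nat.lt_or_ge (w.val % 3) 1 with h0 | h12
    · -- w.val % 3 = 0, so w.val + 4 > n; forces n % 3 = 1 and w.val = n - 1; neighbor 0
      have hv0 : w.val % 3 = 0 := by omega
      have h4 := hw3 hv0
      have hlast : w.val = n - 1 := by omega
      refine ⟨⟨0, by omega⟩, ?_, ?_⟩
      · rw [mem_S2a_mk]; omega
      · exact cg_adj_nat (by omega) 0 w.val (by omega) hwn (by omega)
    · rcases Nat.lt_or_ge (w.val % 3) 2 with h1 | h2
      · -- w.val % 3 = 1
        have hv1 : w.val % 3 = 1 := by omega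
        rcases Nat.lt_or_ge (w.val + 1) n with h | h
        · -- neighbor w - 1, a multiple of 3 with value ≤ n - 4
          refine ⟨⟨w.val - 1, by omega⟩, ?_, ?_⟩
          · rw [mem_S2a_mk]; omega
          · exact cg_adj_nat (by omega) (w.val - 1) w.val (by omega) hwn (by omega)
        · -- w = n - 1, with n % 3 = 2; neighbor n - 2
          refine ⟨⟨n - 2, by omega⟩, ?_, ?_⟩
          · rw [mem_S2a_mk]; omega
          · exact cg_adj_nat (by omega) (n - 2) w.val (by omega) hwn (by omega)
      · -- w.val % 3 = 2
        have hv2 : w.val % 3 = 2 := by omega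
        by_cases heq : w.val + 1 = n - 2
        · -- neighbor n - 2
          refine ⟨⟨n - 2, by omega⟩, ?_, ?_⟩
          · rw [mem_S2a_mk]; omega
          · exact cg_adj_nat (by omega) (n - 2) w.val (by omega) hwn (by omega)
        · -- neighbor w + 1, a multiple of 3 with value ≤ n - 4
          have hlt : w.val + 5 ≤ n := by omega
          refine ⟨⟨w.val + 1, by omega⟩, ?_, ?_⟩
          · rw [mem_S2a_mk]; omega
          · exact cg_adj_nat (by omega) (w.val + 1) w.val (by omega) hwn (by omega)

end CycleAux

set_option maxRecDepth 40000 in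
/-- For `n ≥ 3`, the cycle graph `Cₙ` is unmixed if and only if `n ∈ {3, 4, 5, 7}`. -/
theorem cycleGraph_unmixed_iff (n : ℕ) (hn : 3 ≤ n) :
    Unmixed (SimpleGraph.cycleGraph n) ↔ n = 3 ∨ n = 4 ∨ n = 5 ∨ n = 7 := by
  constructor
  · intro h
    by_contra hmem
    push_neg at hmem
    obtain ⟨h3, h4, h5, h7⟩ := hmem
    have hn6 : 6 ≤ n := by omega
    have hS1 := CycleAux.max_S1 (n := n) (by omega)
    by_cases hr : n % 3 = 0
    · have hS2 := CycleAux.max_S2b (n := n) hn6 hr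
      have hcard := h hS1 hS2
      rw [CycleAux.card_S1, CycleAux.card_S2b] at hcard
      omega
    · have hn8 : 8 ≤ n := by omega
      have hS2 := CycleAux.max_S2a (n := n) hn8 hr
      have hcard := h hS1 hS2
      rw [CycleAux.card_S1, CycleAux.card_S2a] at hcard
      omega
  · rintro (rfl | rfl | rfl | rfl)
    · exact unmixed_of_card _ 1 (by decide)
    · exact unmixed_of_card _ 2 (by decide)
    · exact unmixed_of_card _ 2 (by decide)
    · exact unmixed_of_card _ 3 (by decide)
end

section
/- Let G be a finite simple graph that is bipartite with bipartition (V, W), having no isolated vertices (every vertex lies on at least one edge) and unmixed. Then |V| = |W| and there exists a bijection φ : V → W such that {v, φ(v)} is an edge of G for every v ∈ V; that is, G has a perfect matching pairing V with W. -/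
/-- König-type fact (first step of the proof of Theorem 1.3, (a) ⇒ (b)): an unmixed
bipartite graph with bipartition `(V, W)` and no isolated vertices satisfies `|V| = |W|`
and has a perfect matching pairing `V` with `W`. -/
theorem unmixed_bipartite_perfect_matching {α : Type*} [Fintype α] [DecidableEq α]
    (G : SimpleGraph α) (V W : Finset α)
    (hbip : IsBipartition G V W)
    (hiso : ∀ v : α, ∃ u, G.Adj v u)
    (hunmixed : Unmixed G) :
    V.card = W.card ∧
    ∃ φ : α → α, Set.BijOn φ ↑V ↑W ∧ ∀ v ∈ V, G.Adj v (φ v) := by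
  classical
  obtain ⟨hdisj, huniv, hadj⟩ := hbip
  have hmem : ∀ x : α, x ∈ V ∨ x ∈ W := by
    intro x
    have : x ∈ V ∪ W := by rw [huniv]; exact Finset.mem_univ x
    exact Finset.mem_union.mp this
  have hVindep : IndepSet G V := by
    intro u hu v hv h
    rcases hadj h with ⟨_, hvW⟩ | ⟨huW, _⟩
    · exact (Finset.disjoint_left.mp hdisj hv) hvW
    · exact (Finset.disjoint_left.mp hdisj hu) huW
  have hWindep : IndepSet G W := by
    intro u hu v hv h
    rcases hadj h with ⟨huV, _⟩ | ⟨_, hvV⟩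
    · exact (Finset.disjoint_left.mp hdisj huV) hu
    · exact (Finset.disjoint_left.mp hdisj hvV) hv
  have hVmax : MaxIndepSet G V := by
    refine ⟨hVindep, fun T hT hVT => ?_⟩
    refine Finset.Subset.antisymm ?_ hVT
    intro x hx
    by_contra hxV
    have hxW : x ∈ W := (hmem x).resolve_left hxV
    obtain ⟨u, hu⟩ := hiso x
    rcases hadj hu with ⟨hxV', _⟩ | ⟨_, huV⟩
    · exact hxV hxV'
    · exact hT hx (hVT huV) hu
  have hWmax : MaxIndepSet G W := by
    refine ⟨hWindep, fun T hT hWT => ?_⟩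
    refine Finset.Subset.antisymm ?_ hWT
    intro x hx
    by_contra hxW
    have hxV : x ∈ V := (hmem x).resolve_right hxW
    obtain ⟨u, hu⟩ := hiso x
    rcases hadj hu with ⟨_, huW⟩ | ⟨hxW', _⟩
    · exact hT hx (hWT huW) hu
    · exact hxW hxW'
  have hcard : V.card = W.card := hunmixed hVmax hWmax
  -- every independent set extends to a maximal one
  have hext : ∀ S : Finset α, IndepSet G S → ∃ T, MaxIndepSet G T ∧ S ⊆ T := by
    intro S hS
    obtain ⟨T, hTmem, hTmax⟩ := Finset.exists_max_image
      (Finset.univ.filter (fun T => IndepSet G T ∧ S ⊆ T)) Finset.card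
      ⟨S, Finset.mem_filter.mpr ⟨Finset.mem_univ _, hS, Finset.Subset.refl S⟩⟩
    obtain ⟨-, hTindep, hST⟩ := Finset.mem_filter.mp hTmem
    refine ⟨T, ⟨hTindep, fun T' hT' hTT' => ?_⟩, hST⟩
    have hle : T'.card ≤ T.card := hTmax T'
      (Finset.mem_filter.mpr ⟨Finset.mem_univ _, hT', hST.trans hTT'⟩)
    exact (Finset.eq_of_subset_of_card_le hTT' hle).symm
  -- Hall condition
  let t : {x // x ∈ V} → Finset α := fun v => W.filter (fun w => G.Adj v.1 w)
  have hall : ∀ s : Finset {x // x ∈ V}, s.card ≤ (s.biUnion t).card := by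
    intro s
    set A := s.image Subtype.val with hA
    set N := s.biUnion t with hN
    have hAV : A ⊆ V := by
      intro x hx; obtain ⟨v, -, rfl⟩ := Finset.mem_image.mp hx; exact v.2
    have hNW : N ⊆ W := by
      intro x hx; obtain ⟨v, -, hv⟩ := Finset.mem_biUnion.mp hx
      exact (Finset.mem_filter.mp hv).1
    have hAcard : A.card = s.card := Finset.card_image_of_injective _ Subtype.val_injective
    have hindep : IndepSet G (A ∪ (W \ N)) := by
      intro u hu v hv h
      rcases Finset.mem_union.mp hu with huA | huWN
      · rcases Finset.mem_union.mp hv with hvA | hvWN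
        · exact hVindep (hAV huA) (hAV hvA) h
        · obtain ⟨u', hu', rfl⟩ := Finset.mem_image.mp huA
          have hvN : v ∈ N := Finset.mem_biUnion.mpr
            ⟨u', hu', Finset.mem_filter.mpr ⟨(Finset.mem_sdiff.mp hvWN).1, h⟩⟩
          exact (Finset.mem_sdiff.mp hvWN).2 hvN
      · rcases Finset.mem_union.mp hv with hvA | hvWN
        · obtain ⟨v', hv', rfl⟩ := Finset.mem_image.mp hvA
          have huN : u ∈ N := Finset.mem_biUnion.mpr
            ⟨v', hv', Finset.mem_filter.mpr ⟨(Finset.mem_sdiff.mp huWN).1, h.symm⟩⟩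
          exact (Finset.mem_sdiff.mp huWN).2 huN
        · exact hWindep (Finset.mem_sdiff.mp huWN).1 (Finset.mem_sdiff.mp hvWN).1 h
    obtain ⟨T, hTmax, hsub⟩ := hext _ hindep
    have hTcard : T.card = W.card := hunmixed hTmax hWmax
    have hdisjAN : Disjoint A (W \ N) :=
      (hdisj.mono hAV (Finset.sdiff_subset))
    have hle : A.card + (W \ N).card ≤ T.card := by
      rw [← Finset.card_union_of_disjoint hdisjAN]
      exact Finset.card_le_card hsub
    have hsd : (W \ N).card = W.card - N.card := Finset.card_sdiff_of_subset hNW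
    have hNle : N.card ≤ W.card := Finset.card_le_card hNW
    omega
  obtain ⟨f, hfinj, hft⟩ := (Finset.all_card_le_biUnion_card_iff_exists_injective t).mp hall
  have hftW : ∀ v : {x // x ∈ V}, f v ∈ W ∧ G.Adj v.1 (f v) := by
    intro v
    have := hft v
    exact Finset.mem_filter.mp this
  let φ : α → α := fun a => if h : a ∈ V then f ⟨a, h⟩ else a
  have hφ : ∀ v (h : v ∈ V), φ v = f ⟨v, h⟩ := fun v h => dif_pos h
  have hmaps : ∀ v ∈ V, φ v ∈ W ∧ G.Adj v (φ v) := by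
    intro v hv
    rw [hφ v hv]
    exact hftW ⟨v, hv⟩
  have hinjOn : Set.InjOn φ ↑V := by
    intro u hu v hv h
    rw [Finset.mem_coe] at hu hv
    rw [hφ u hu, hφ v hv] at h
    have := hfinj h
    exact congrArg Subtype.val this
  have himg : V.image φ = W := by
    apply Finset.eq_of_subset_of_card_le
    · intro x hx
      obtain ⟨v, hv, rfl⟩ := Finset.mem_image.mp hx
      exact (hmaps v hv).1
    · rw [Finset.card_image_of_injOn hinjOn, ← hcard]
  refine ⟨hcard, φ, ⟨?_, hinjOn, ?_⟩, fun v hv => (hmaps v hv).2⟩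
  · intro v hv
    rw [Finset.mem_coe] at hv ⊢
    exact (hmaps v hv).1
  · intro w hw
    rw [Finset.mem_coe] at hw
    rw [← himg] at hw
    obtain ⟨v, hv, rfl⟩ := Finset.mem_image.mp hw
    exact ⟨v, hv, rfl⟩
end

section
/- Let G be a tree (a connected acyclic finite simple graph) with at least four vertices. Then the following are equivalent: (a) G is unmixed and has a bipartition (V, W) with |V| = |W| = n for which V and W are maximal independent sets and there exist maximal independent sets F_0 = V, F_1, …, F_n = W of G with |F_i ∩ F_{i+1}| = n − 1 for every i; (b) G has a bipartition V = {x_1,…,x_n}, W = {y_1,…,y_n} such that (i) {x_i, y_i} is an edge of G for every i, (ii) for each i exactly one of the vertices x_i and y_i has degree 1, and (iii) there exist maximal independent sets F_0 = V, F_1, …, F_n = W of G with |F_i ∩ F_{i+1}| = n − 1 for every i. -/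
set_option linter.unusedSectionVars false
set_option maxHeartbeats 1000000

section Aux
variable {α : Type*} [Fintype α] [DecidableEq α] (G : SimpleGraph α) [DecidableRel G.Adj]

lemma exists_maxIndep_superset_aux :
    ∀ (k : ℕ) (S : Finset α), Fintype.card α - S.card ≤ k → IndepSet G S →
      ∃ M, MaxIndepSet G M ∧ S ⊆ M := by
  intro k
  induction k with
  | zero =>
    intro S hk hS
    refine ⟨S, ⟨hS, fun T hT hST => ?_⟩, Finset.Subset.refl S⟩
    have h1 : T.card ≤ Fintype.card α := Finset.card_le_univ T
    exact (Finset.eq_of_subset_of_card_le hST (by omega)).symm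
  | succ k ih =>
    intro S hk hS
    by_cases h : ∀ ⦃T⦄, IndepSet G T → S ⊆ T → T = S
    · exact ⟨S, ⟨hS, h⟩, Finset.Subset.refl S⟩
    · push_neg at h
      obtain ⟨T, hT, hST, hne⟩ := h
      have hcard : S.card < T.card :=
        Finset.card_lt_card (hST.ssubset_of_ne (fun e => hne e.symm))
      have h1 : T.card ≤ Fintype.card α := Finset.card_le_univ T
      obtain ⟨M, hM, hTM⟩ := ih T (by omega) hT
      exact ⟨M, hM, hST.trans hTM⟩

lemma exists_maxIndep_superset (S : Finset α) (hS : IndepSet G S) :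
    ∃ M, MaxIndepSet G M ∧ S ⊆ M :=
  exists_maxIndep_superset_aux G (Fintype.card α) S (by omega) hS

lemma degree_one_nbr {z p : α} (hz : G.degree z = 1) (hzp : G.Adj z p) :
    G.neighborFinset z = {p} := by
  rw [← SimpleGraph.card_neighborFinset_eq_degree] at hz
  obtain ⟨a, ha⟩ := Finset.card_eq_one.mp hz
  have hp : p ∈ G.neighborFinset z := (SimpleGraph.mem_neighborFinset G z p).mpr hzp
  rw [ha] at hp ⊢
  rw [Finset.mem_singleton] at hp
  rw [hp]

lemma insert_degree_one {M : Finset α} (hM : MaxIndepSet G M) {z p : α}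
    (hz : G.degree z = 1) (hzp : G.Adj z p) (hpM : p ∉ M) : z ∈ M := by
  have hnbr := degree_one_nbr G hz hzp
  have hind : IndepSet G (insert z M) := by
    intro u hu v hv hadj
    rw [Finset.mem_insert] at hu hv
    rcases hu with rfl | hu <;> rcases hv with rfl | hv
    · exact G.irrefl hadj
    · have : v ∈ G.neighborFinset u := (SimpleGraph.mem_neighborFinset G u v).mpr hadj
      rw [hnbr, Finset.mem_singleton] at this
      exact hpM (this ▸ hv)
    · have : u ∈ G.neighborFinset v := (SimpleGraph.mem_neighborFinset G v u).mpr hadj.symm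
      rw [hnbr, Finset.mem_singleton] at this
      exact hpM (this ▸ hu)
    · exact hM.1 hu hv hadj
  have heq := hM.2 hind (Finset.subset_insert z M)
  exact heq ▸ Finset.mem_insert_self z M

end Aux

section Aux2
variable {α : Type*} [Fintype α] [DecidableEq α] {G : SimpleGraph α} [DecidableRel G.Adj]

lemma pair_inter_card_le_one {M : Finset α} (hM : IndepSet G M) {a b : α}
    (hab : G.Adj a b) : (M ∩ {a, b}).card ≤ 1 := by
  refine Finset.card_le_one.mpr ?_
  intro u hu v hv
  rw [Finset.mem_inter] at hu hv
  obtain ⟨huM, hu2⟩ := hu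
  obtain ⟨hvM, hv2⟩ := hv
  simp only [Finset.mem_insert, Finset.mem_singleton] at hu2 hv2
  rcases hu2 with rfl | rfl <;> rcases hv2 with rfl | rfl
  · rfl
  · exact absurd hab (hM huM hvM)
  · exact absurd hab.symm (hM huM hvM)
  · rfl

lemma card_eq_sum_pairs {n : ℕ} {x y : Fin n → α}
    (hx : Function.Injective x) (hy : Function.Injective y)
    (hxy : ∀ i j, x i ≠ y j)
    (hcover : ∀ a : α, ∃ i, a = x i ∨ a = y i)
    (M : Finset α) :
    M.card = ∑ i, (M ∩ ({x i, y i} : Finset α)).card := by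
  have hdisj : ∀ i ∈ (Finset.univ : Finset (Fin n)), ∀ j ∈ (Finset.univ : Finset (Fin n)),
      i ≠ j → Disjoint (M ∩ ({x i, y i} : Finset α)) (M ∩ ({x j, y j} : Finset α)) := by
    intro i _ j _ hij
    rw [Finset.disjoint_left]
    intro a ha ha'
    rw [Finset.mem_inter] at ha ha'
    simp only [Finset.mem_insert, Finset.mem_singleton] at ha ha'
    rcases ha.2 with rfl | rfl <;> rcases ha'.2 with h | h
    · exact hij (hx h)
    · exact hxy i j h
    · exact hxy j i h.symm
    · exact hij (hy h)
  have hM : M = Finset.univ.biUnion (fun i : Fin n => M ∩ ({x i, y i} : Finset α)) := by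
    ext a
    simp only [Finset.mem_biUnion, Finset.mem_univ, Finset.mem_inter, true_and,
      Finset.mem_insert, Finset.mem_singleton]
    constructor
    · intro ha
      obtain ⟨i, hi⟩ := hcover a
      exact ⟨i, ha, hi⟩
    · rintro ⟨i, ha, _⟩
      exact ha
  calc M.card = (Finset.univ.biUnion (fun i : Fin n => M ∩ ({x i, y i} : Finset α))).card := by
        rw [← hM]
    _ = ∑ i, (M ∩ ({x i, y i} : Finset α)).card := Finset.card_biUnion hdisj

lemma maxIndep_card_eq {n : ℕ} {x y : Fin n → α}
    (hx : Function.Injective x) (hy : Function.Injective y)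
    (hxy : ∀ i j, x i ≠ y j)
    (hcover : ∀ a : α, ∃ i, a = x i ∨ a = y i)
    (hadj : ∀ i, G.Adj (x i) (y i))
    (hxor : ∀ i, Xor' (G.degree (x i) = 1) (G.degree (y i) = 1))
    {M : Finset α} (hM : MaxIndepSet G M) : M.card = n := by
  rw [card_eq_sum_pairs hx hy hxy hcover M]
  have hone : ∀ i : Fin n, (M ∩ ({x i, y i} : Finset α)).card = 1 := by
    intro i
    refine le_antisymm (pair_inter_card_le_one hM.1 (hadj i)) ?_
    have hmem : x i ∈ M ∨ y i ∈ M := by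
      rcases hxor i with ⟨h1, _⟩ | ⟨h1, _⟩
      · by_cases h : y i ∈ M
        · exact Or.inr h
        · exact Or.inl (insert_degree_one G hM h1 (hadj i) h)
      · by_cases h : x i ∈ M
        · exact Or.inl h
        · exact Or.inr (insert_degree_one G hM h1 (hadj i).symm h)
    rw [Nat.one_le_iff_ne_zero, Ne, Finset.card_eq_zero, ← Finset.not_nonempty_iff_eq_empty,
      not_not]
    rcases hmem with h | h
    · exact ⟨x i, Finset.mem_inter.mpr ⟨h, Finset.mem_insert_self _ _⟩⟩
    · exact ⟨y i, Finset.mem_inter.mpr ⟨h, by simp⟩⟩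
  simp [hone]

end Aux2
section AtoB
variable {α : Type*} [Fintype α] [DecidableEq α] {G : SimpleGraph α} [DecidableRel G.Adj]

/-- Hall condition and matching extraction for an unmixed "suitable" bipartite graph. -/
lemma exists_matching {n : ℕ} {V W : Finset α}
    (hunmix : Unmixed G) (hbip : IsBipartition G V W) (hV : V.card = n) (hW : W.card = n)
    (hVmax : MaxIndepSet G V) (hWmax : MaxIndepSet G W) :
    ∃ f : {a // a ∈ V} → α, Function.Injective f ∧ (∀ v : {a // a ∈ V}, G.Adj ↑v (f v)) ∧
      Finset.univ.image f = W := by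
  have hmaxcard : ∀ ⦃M : Finset α⦄, MaxIndepSet G M → M.card = n :=
    fun M hM => (hunmix hM hVmax).trans hV
  have hVW : ∀ ⦃v u : α⦄, v ∈ V → G.Adj v u → u ∈ W := by
    intro v u hv h
    rcases hbip.2.2 h with ⟨_, h2⟩ | ⟨h1, _⟩
    · exact h2
    · exact absurd hv (Finset.disjoint_right.mp hbip.1 h1)
  set t : {a // a ∈ V} → Finset α := fun v => G.neighborFinset ↑v with ht
  have hall : ∀ s : Finset {a // a ∈ V}, s.card ≤ (s.biUnion t).card := by
    intro s
    set A : Finset α := s.image Subtype.val with hA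
    set N : Finset α := s.biUnion t with hN
    have hAcard : A.card = s.card := Finset.card_image_of_injective s Subtype.val_injective
    have hAV : A ⊆ V := by
      intro a ha
      rw [hA, Finset.mem_image] at ha
      obtain ⟨v, _, rfl⟩ := ha
      exact v.2
    have hNW : N ⊆ W := by
      intro a ha
      rw [hN, Finset.mem_biUnion] at ha
      obtain ⟨v, _, hv⟩ := ha
      exact hVW v.2 ((SimpleGraph.mem_neighborFinset G _ _).mp hv)
    have hS0 : IndepSet G (A ∪ (W \ N)) := by
      intro u hu v hv hadj
      rw [Finset.mem_union] at hu hv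
      have hedge : ∀ ⦃a b : α⦄, a ∈ A → G.Adj a b → b ∈ N := by
        intro a b ha hab
        rw [hA, Finset.mem_image] at ha
        obtain ⟨va, hva, rfl⟩ := ha
        rw [hN, Finset.mem_biUnion]
        exact ⟨va, hva, (SimpleGraph.mem_neighborFinset G _ _).mpr hab⟩
      rcases hu with hu | hu <;> rcases hv with hv | hv
      · exact hVmax.1 (hAV hu) (hAV hv) hadj
      · exact (Finset.mem_sdiff.mp hv).2 (hedge hu hadj)
      · exact (Finset.mem_sdiff.mp hu).2 (hedge hv hadj.symm)
      · exact hWmax.1 (Finset.mem_sdiff.mp hu).1 (Finset.mem_sdiff.mp hv).1 hadj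
    obtain ⟨M, hMmax, hS0M⟩ := exists_maxIndep_superset G _ hS0
    have hMn : M.card = n := hmaxcard hMmax
    have hAMV : A ⊆ M ∩ V :=
      Finset.subset_inter ((Finset.subset_union_left).trans hS0M) hAV
    have hWNMW : W \ N ⊆ M ∩ W :=
      Finset.subset_inter ((Finset.subset_union_right).trans hS0M) (Finset.sdiff_subset)
    have hsplit : (M ∩ V).card + (M ∩ W).card = n := by
      have hdisj : Disjoint (M ∩ V) (M ∩ W) :=
        hbip.1.mono inf_le_right inf_le_right
      rw [← Finset.card_union_of_disjoint hdisj, ← Finset.inter_union_distrib_left,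
        hbip.2.1, Finset.inter_univ, hMn]
    have h1 : A.card ≤ (M ∩ V).card := Finset.card_le_card hAMV
    have h2 : (W \ N).card ≤ (M ∩ W).card := Finset.card_le_card hWNMW
    have h3 : (W ∩ N).card + (W \ N).card = W.card := Finset.card_inter_add_card_sdiff W N
    have h4 : (W ∩ N).card ≤ N.card := Finset.card_le_card (Finset.inter_subset_right)
    omega
  obtain ⟨f, hfinj, hft⟩ := (Finset.all_card_le_biUnion_card_iff_exists_injective t).mp hall
  have hadjf : ∀ v : {a // a ∈ V}, G.Adj ↑v (f v) :=
    fun v => (SimpleGraph.mem_neighborFinset G _ _).mp (hft v)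
  have hfW : ∀ v, f v ∈ W := fun v => hVW v.2 (hadjf v)
  refine ⟨f, hfinj, hadjf, ?_⟩
  have hsub : Finset.univ.image f ⊆ W := by
    intro a ha
    rw [Finset.mem_image] at ha
    obtain ⟨v, _, rfl⟩ := ha
    exact hfW v
  have hcardim : (Finset.univ.image f).card = n := by
    rw [Finset.card_image_of_injective _ hfinj, Finset.card_univ, Fintype.card_coe, hV]
  exact Finset.eq_of_subset_of_card_le hsub (by omega)

end AtoB
section AtoB2
variable {α : Type*} [Fintype α] [DecidableEq α] {G : SimpleGraph α} [DecidableRel G.Adj]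

lemma a_to_b {n : ℕ} {V W : Finset α}
    (htree : G.IsTree) (hcard : 4 ≤ Fintype.card α)
    (hunmix : Unmixed G) (hbip : IsBipartition G V W) (hV : V.card = n) (hW : W.card = n)
    (hVmax : MaxIndepSet G V) (hWmax : MaxIndepSet G W) :
    ∃ x y : Fin n → α, Function.Injective x ∧ Function.Injective y ∧
      (∀ i j, x i ≠ y j) ∧ Finset.univ.image x = V ∧ Finset.univ.image y = W ∧
      (∀ i, G.Adj (x i) (y i)) ∧
      (∀ i, Xor' (G.degree (x i) = 1) (G.degree (y i) = 1)) := by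
  obtain ⟨f, hfinj, hadjf, hfim⟩ := exists_matching hunmix hbip hV hW hVmax hWmax
  have hVW : ∀ ⦃v u : α⦄, v ∈ V → G.Adj v u → u ∈ W := by
    intro v u hv h
    rcases hbip.2.2 h with ⟨_, h2⟩ | ⟨h1, _⟩
    · exact h2
    · exact absurd hv (Finset.disjoint_right.mp hbip.1 h1)
  have hWV : ∀ ⦃v u : α⦄, v ∈ W → G.Adj v u → u ∈ V := by
    intro v u hv h
    rcases hbip.2.2 h with ⟨h1, _⟩ | ⟨_, h2⟩
    · exact absurd h1 (Finset.disjoint_left.mp hbip.1 · hv)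
    · exact h2
  have hcardV : Fintype.card {a // a ∈ V} = n := by rw [Fintype.card_coe, hV]
  set e : Fin n ≃ {a // a ∈ V} := (Fintype.equivFinOfCardEq hcardV).symm with he
  set x : Fin n → α := fun i => ((e i : {a // a ∈ V}) : α) with hx
  set y : Fin n → α := fun i => f (e i) with hy
  have hxinj : Function.Injective x := fun i j h => e.injective (Subtype.val_injective h)
  have hyinj : Function.Injective y := fun i j h => e.injective (hfinj h)
  have hxV : ∀ i, x i ∈ V := fun i => (e i).2
  have hfW : ∀ v, f v ∈ W := by
    intro v
    rw [← hfim]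
    exact Finset.mem_image_of_mem f (Finset.mem_univ v)
  have hyW : ∀ i, y i ∈ W := fun i => hfW (e i)
  have hxy : ∀ i j, x i ≠ y j := by
    intro i j h
    exact Finset.disjoint_left.mp hbip.1 (hxV i) (h ▸ hyW j)
  have hadjxy : ∀ i, G.Adj (x i) (y i) := fun i => hadjf (e i)
  have hximV : Finset.univ.image x = V := by
    apply Finset.Subset.antisymm
    · intro a ha
      rw [Finset.mem_image] at ha
      obtain ⟨i, _, rfl⟩ := ha
      exact hxV i
    · intro a ha
      rw [Finset.mem_image]
      exact ⟨e.symm ⟨a, ha⟩, Finset.mem_univ _, by simp [hx]⟩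
  have hyimW : Finset.univ.image y = W := by
    have hsub : Finset.univ.image y ⊆ W := by
      intro a ha
      rw [Finset.mem_image] at ha
      obtain ⟨i, _, rfl⟩ := ha
      exact hyW i
    have : (Finset.univ.image y).card = n := by
      rw [Finset.card_image_of_injective _ hyinj, Finset.card_univ, Fintype.card_fin]
    exact Finset.eq_of_subset_of_card_le hsub (by omega)
  have hcover : ∀ a : α, ∃ i, a = x i ∨ a = y i := by
    intro a
    have ha : a ∈ V ∪ W := by rw [hbip.2.1]; exact Finset.mem_univ a
    rw [Finset.mem_union] at ha
    rcases ha with ha | ha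
    · rw [← hximV, Finset.mem_image] at ha
      obtain ⟨i, _, rfl⟩ := ha
      exact ⟨i, Or.inl rfl⟩
    · rw [← hyimW, Finset.mem_image] at ha
      obtain ⟨i, _, rfl⟩ := ha
      exact ⟨i, Or.inr rfl⟩
  have hn2 : 2 ≤ n := by
    have h1 : (Finset.univ : Finset α).card ≤ V.card + W.card := by
      rw [← hbip.2.1]; exact Finset.card_union_le V W
    rw [Finset.card_univ] at h1
    omega
  have hmaxcard : ∀ ⦃M : Finset α⦄, MaxIndepSet G M → M.card = n :=
    fun M hM => (hunmix hM hVmax).trans hV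
  refine ⟨x, y, hxinj, hyinj, hxy, hximV, hyimW, hadjxy, ?_⟩
  intro i
  have hvw := hadjxy i
  -- not both have degree one
  have hnotboth : ¬ (G.degree (x i) = 1 ∧ G.degree (y i) = 1) := by
    rintro ⟨h1, h2⟩
    have hnv : G.neighborFinset (x i) = {y i} := degree_one_nbr G h1 hvw
    have hnw : G.neighborFinset (y i) = {x i} := degree_one_nbr G h2 hvw.symm
    have hu : ∃ u : α, u ≠ x i ∧ u ≠ y i := by
      by_contra h
      push_neg at h
      have hsub : (Finset.univ : Finset α) ⊆ {x i, y i} := by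
        intro a _
        by_cases ha : a = x i
        · exact Finset.mem_insert.mpr (Or.inl ha)
        · exact Finset.mem_insert.mpr (Or.inr (Finset.mem_singleton.mpr (h a ha)))
      have hc := Finset.card_le_card hsub
      have : ({x i, y i} : Finset α).card ≤ 2 :=
        (Finset.card_insert_le _ _).trans (by simp)
      rw [Finset.card_univ] at hc
      omega
    obtain ⟨u, huv, huw⟩ := hu
    have key : ∀ (a b : α) (p : G.Walk a b), (a = x i ∨ a = y i) → (b = x i ∨ b = y i) := by
      intro a b p
      induction p with
      | nil => exact id
      | cons hac q ih =>
        intro h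
        apply ih
        rcases h with rfl | rfl
        · right
          have hm := (SimpleGraph.mem_neighborFinset G _ _).mpr hac
          rw [hnv, Finset.mem_singleton] at hm
          exact hm
        · left
          have hm := (SimpleGraph.mem_neighborFinset G _ _).mpr hac
          rw [hnw, Finset.mem_singleton] at hm
          exact hm
    obtain ⟨p⟩ := htree.isConnected.preconnected (x i) u
    rcases key (x i) u p (Or.inl rfl) with h | h
    · exact huv h
    · exact huw h
  -- at least one has degree one
  have hor : G.degree (x i) = 1 ∨ G.degree (y i) = 1 := by
    by_contra hno
    rw [not_or] at hno
    obtain ⟨h1, h2⟩ := hno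
    have hd1 : 1 < (G.neighborFinset (x i)).card := by
      have hpos : 0 < (G.neighborFinset (x i)).card :=
        Finset.card_pos.mpr ⟨y i, (SimpleGraph.mem_neighborFinset G _ _).mpr hvw⟩
      have := SimpleGraph.card_neighborFinset_eq_degree G (x i)
      omega
    have hd2 : 1 < (G.neighborFinset (y i)).card := by
      have hpos : 0 < (G.neighborFinset (y i)).card :=
        Finset.card_pos.mpr ⟨x i, (SimpleGraph.mem_neighborFinset G _ _).mpr hvw.symm⟩
      have := SimpleGraph.card_neighborFinset_eq_degree G (y i)
      omega
    obtain ⟨w', hw'mem, hw'ne⟩ := Finset.exists_mem_ne hd1 (y i)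
    obtain ⟨v', hv'mem, hv'ne⟩ := Finset.exists_mem_ne hd2 (x i)
    have hvw' : G.Adj (x i) w' := (SimpleGraph.mem_neighborFinset G _ _).mp hw'mem
    have hwv' : G.Adj (y i) v' := (SimpleGraph.mem_neighborFinset G _ _).mp hv'mem
    have hnadj : ¬ G.Adj v' w' := by
      intro hadj'
      have hp1 : (SimpleGraph.Walk.cons hvw (SimpleGraph.Walk.cons hwv'
          SimpleGraph.Walk.nil)).IsPath := by
        rw [SimpleGraph.Walk.isPath_def]
        simp only [SimpleGraph.Walk.support_cons, SimpleGraph.Walk.support_nil]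
        simp [List.nodup_cons, hvw.ne, hwv'.ne, hv'ne.symm]
      have hp2 : (SimpleGraph.Walk.cons hvw' (SimpleGraph.Walk.cons hadj'.symm
          SimpleGraph.Walk.nil)).IsPath := by
        rw [SimpleGraph.Walk.isPath_def]
        simp only [SimpleGraph.Walk.support_cons, SimpleGraph.Walk.support_nil]
        simp [List.nodup_cons, hvw'.ne, hadj'.ne', hv'ne.symm]
      have := htree.IsAcyclic.path_unique ⟨_, hp1⟩ ⟨_, hp2⟩
      have hwalks := congrArg Subtype.val this
      have hsupp := congrArg SimpleGraph.Walk.support hwalks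
      simp only [SimpleGraph.Walk.support_cons, SimpleGraph.Walk.support_nil,
        List.cons.injEq] at hsupp
      exact hw'ne hsupp.2.1.symm
    have hS1 : IndepSet G ({v', w'} : Finset α) := by
      intro a ha b hb hab
      simp only [Finset.mem_insert, Finset.mem_singleton] at ha hb
      rcases ha with rfl | rfl <;> rcases hb with rfl | rfl
      · exact G.irrefl hab
      · exact hnadj hab
      · exact hnadj hab.symm
      · exact G.irrefl hab
    obtain ⟨M, hMmax, hsubM⟩ := exists_maxIndep_superset G _ hS1
    have hv'M : v' ∈ M := hsubM (by simp)
    have hw'M : w' ∈ M := hsubM (by simp)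
    have hMn : M.card = n := hmaxcard hMmax
    have hxiM : x i ∉ M := fun h => hMmax.1 h hw'M hvw'
    have hyiM : y i ∉ M := fun h => hMmax.1 h hv'M hwv'
    have hterm0 : M ∩ ({x i, y i} : Finset α) = ∅ := by
      rw [Finset.eq_empty_iff_forall_notMem]
      intro a ha
      rw [Finset.mem_inter] at ha
      simp only [Finset.mem_insert, Finset.mem_singleton] at ha
      rcases ha.2 with rfl | rfl
      · exact hxiM ha.1
      · exact hyiM ha.1
    have hsum := card_eq_sum_pairs hxinj hyinj hxy hcover M
    rw [hMn] at hsum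
    have hsplit : ∑ j ∈ (Finset.univ : Finset (Fin n)).erase i,
        (M ∩ ({x j, y j} : Finset α)).card + (M ∩ ({x i, y i} : Finset α)).card
        = ∑ j, (M ∩ ({x j, y j} : Finset α)).card :=
      Finset.sum_erase_add _ _ (Finset.mem_univ i)
    have hle : ∑ j ∈ (Finset.univ : Finset (Fin n)).erase i,
        (M ∩ ({x j, y j} : Finset α)).card ≤ n - 1 := by
      calc ∑ j ∈ (Finset.univ : Finset (Fin n)).erase i, (M ∩ ({x j, y j} : Finset α)).card
          ≤ ∑ _j ∈ (Finset.univ : Finset (Fin n)).erase i, 1 :=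
            Finset.sum_le_sum (fun j _ => pair_inter_card_le_one hMmax.1 (hadjxy j))
        _ = n - 1 := by
            rw [Finset.sum_const, smul_eq_mul, mul_one,
              Finset.card_erase_of_mem (Finset.mem_univ i), Finset.card_univ, Fintype.card_fin]
    rw [hterm0, Finset.card_empty] at hsplit
    omega
  rcases hor with h | h
  · exact Or.inl ⟨h, fun h2 => hnotboth ⟨h, h2⟩⟩
  · exact Or.inr ⟨h, fun h2 => hnotboth ⟨h2, h⟩⟩

end AtoB2


/-- Corollary 1.7 (combinatorial content): for a tree `G` with at least four vertices,
the combinatorial `S₂` condition (a) — unmixedness together with a chain of maximal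
independent sets `V = F₀, …, Fₙ = W` with consecutive intersections of cardinality
`n - 1` for some bipartition `(V, W)` with `|V| = |W| = n` — is equivalent to (b): the
existence of a labeling `V = {x₁,…,xₙ}`, `W = {y₁,…,yₙ}` such that (i) `{xᵢ,yᵢ}` is an
edge for every `i`, (ii) for each `i` exactly one of `xᵢ`, `yᵢ` has degree one, and
(iii) such a chain of maximal independent sets exists. -/
theorem tree_S2_characterization {α : Type*} [Fintype α] [DecidableEq α]
    (G : SimpleGraph α) [DecidableRel G.Adj]
    (htree : G.IsTree) (hcard : 4 ≤ Fintype.card α) :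
    (∃ (n : ℕ) (V W : Finset α),
      Unmixed G ∧ IsBipartition G V W ∧ V.card = n ∧ W.card = n ∧
      MaxIndepSet G V ∧ MaxIndepSet G W ∧
      ∃ F : ℕ → Finset α,
        F 0 = V ∧ F n = W ∧ (∀ i ≤ n, MaxIndepSet G (F i)) ∧
        ∀ i < n, (F i ∩ F (i + 1)).card = n - 1) ↔
    (∃ (n : ℕ) (x y : Fin n → α),
      Function.Injective x ∧ Function.Injective y ∧ (∀ i j, x i ≠ y j) ∧
      IsBipartition G (Finset.univ.image x) (Finset.univ.image y) ∧
      (∀ i, G.Adj (x i) (y i)) ∧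
      (∀ i, Xor' (G.degree (x i) = 1) (G.degree (y i) = 1)) ∧
      ∃ F : ℕ → Finset α,
        F 0 = Finset.univ.image x ∧ F n = Finset.univ.image y ∧
        (∀ i ≤ n, MaxIndepSet G (F i)) ∧
        ∀ i < n, (F i ∩ F (i + 1)).card = n - 1) := by
  constructor
  · rintro ⟨n, V, W, hunmix, hbip, hV, hW, hVmax, hWmax, F, hF0, hFn, hFmax, hFc⟩
    obtain ⟨x, y, hxinj, hyinj, hxy, hximV, hyimW, hadjxy, hxor⟩ :=
      a_to_b htree hcard hunmix hbip hV hW hVmax hWmax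
    refine ⟨n, x, y, hxinj, hyinj, hxy, ?_, hadjxy, hxor, F, ?_, ?_, hFmax, hFc⟩
    · rw [hximV, hyimW]; exact hbip
    · rw [hximV]; exact hF0
    · rw [hyimW]; exact hFn
  · rintro ⟨n, x, y, hxinj, hyinj, hxy, hbip, hadjxy, hxor, F, hF0, hFn, hFmax, hFc⟩
    have hV : (Finset.univ.image x).card = n := by
      rw [Finset.card_image_of_injective _ hxinj, Finset.card_univ, Fintype.card_fin]
    have hW : (Finset.univ.image y).card = n := by
      rw [Finset.card_image_of_injective _ hyinj, Finset.card_univ, Fintype.card_fin]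
    have hcover : ∀ a : α, ∃ i, a = x i ∨ a = y i := by
      intro a
      have ha : a ∈ Finset.univ.image x ∪ Finset.univ.image y := by
        rw [hbip.2.1]; exact Finset.mem_univ a
      rw [Finset.mem_union] at ha
      rcases ha with ha | ha <;> rw [Finset.mem_image] at ha
      · obtain ⟨i, _, rfl⟩ := ha
        exact ⟨i, Or.inl rfl⟩
      · obtain ⟨i, _, rfl⟩ := ha
        exact ⟨i, Or.inr rfl⟩
    have hunmix : Unmixed G := by
      intro S T hS hT
      rw [maxIndep_card_eq hxinj hyinj hxy hcover hadjxy hxor hS,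
        maxIndep_card_eq hxinj hyinj hxy hcover hadjxy hxor hT]
    refine ⟨n, Finset.univ.image x, Finset.univ.image y, hunmix, hbip, hV, hW,
      hF0 ▸ hFmax 0 (Nat.zero_le n), hFn ▸ hFmax n le_rfl, F, hF0, hFn, hFmax, hFc⟩
end
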